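/- arXiv:2006.01858 — 5 statements merged into one kernel-verified Lean document; each statement's English description precedes it below -/
import Mathlib

section
/- For a square matrix M ∈ ℝ^{n×n}, the matrix exponential exp(M t) is entrywise non-negative for all t ≥ 0 if and only if M is essentially non-negative, i.e., M_{ij} ≥ 0 for all i ≠ j. -/
set_option maxHeartbeats 2000000


open Matrix

section Aux

variable {n : ℕ}

private lemma aux_pow_nonneg {A : Matrix (Fin n) (Fin n) ℝ} (hA : ∀ i j, 0 ≤ A i j) (k : ℕ) :
    ∀ i j, 0 ≤ (A ^ k) i j := by
  induction k with
  | zero =>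
    intro i j
    rw [pow_zero, Matrix.one_apply]
    split <;> norm_num
  | succ k ih =>
    intro i j
    rw [pow_succ, Matrix.mul_apply]
    exact Finset.sum_nonneg fun l _ => mul_nonneg (ih i l) (hA l j)

private lemma aux_entry_hasSum (A : Matrix (Fin n) (Fin n) ℝ) (i j : Fin n) :
    HasSum (fun k : ℕ => ((k.factorial : ℝ)⁻¹ • A ^ k) i j) (NormedSpace.exp A i j) := by
  have h1 : HasSum (fun k : ℕ => (k.factorial : ℝ)⁻¹ • A ^ k) (NormedSpace.exp A) := by
    letI : SeminormedRing (Matrix (Fin n) (Fin n) ℝ) := Matrix.linftyOpSemiNormedRing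
    letI : NormedRing (Matrix (Fin n) (Fin n) ℝ) := Matrix.linftyOpNormedRing
    letI : NormedAlgebra ℝ (Matrix (Fin n) (Fin n) ℝ) := Matrix.linftyOpNormedAlgebra
    letI : CompleteSpace (Matrix (Fin n) (Fin n) ℝ) := FiniteDimensional.complete ℝ _
    have hsum : Summable (fun k : ℕ => (k.factorial : ℝ)⁻¹ • A ^ k) :=
      NormedSpace.expSeries_summable' (𝕂 := ℝ) A
    have h2 : NormedSpace.exp A = ∑' k : ℕ, (k.factorial : ℝ)⁻¹ • A ^ k :=
      congrFun (NormedSpace.exp_eq_tsum ℝ) A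
    rw [h2]
    exact hsum.hasSum
  let e : Matrix (Fin n) (Fin n) ℝ →L[ℝ] ℝ :=
    { toFun := fun B => B i j
      map_add' := fun _ _ => rfl
      map_smul' := fun _ _ => rfl
      cont := (continuous_apply j).comp (continuous_apply i) }
  exact e.hasSum h1

private lemma aux_exp_entry_nonneg {A : Matrix (Fin n) (Fin n) ℝ} (hA : ∀ i j, 0 ≤ A i j)
    (i j : Fin n) : 0 ≤ NormedSpace.exp A i j := by
  have h := aux_entry_hasSum A i j
  rw [← h.tsum_eq]
  refine tsum_nonneg fun k => ?_
  rw [Matrix.smul_apply]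
  exact smul_nonneg (by positivity) (aux_pow_nonneg hA k i j)

private lemma aux_exp_smul_one (s : ℝ) :
    NormedSpace.exp (s • (1 : Matrix (Fin n) (Fin n) ℝ)) =
      Real.exp s • (1 : Matrix (Fin n) (Fin n) ℝ) := by
  letI : SeminormedRing (Matrix (Fin n) (Fin n) ℝ) := Matrix.linftyOpSemiNormedRing
  letI : NormedRing (Matrix (Fin n) (Fin n) ℝ) := Matrix.linftyOpNormedRing
  letI : NormedAlgebra ℝ (Matrix (Fin n) (Fin n) ℝ) := Matrix.linftyOpNormedAlgebra
  letI : CompleteSpace (Matrix (Fin n) (Fin n) ℝ) := FiniteDimensional.complete ℝ _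
  have h1 : s • (1 : Matrix (Fin n) (Fin n) ℝ) = algebraMap ℝ _ s :=
    (Algebra.algebraMap_eq_smul_one s).symm
  rw [h1]
  erw [← NormedSpace.algebraMap_exp_comm]
  rw [Algebra.algebraMap_eq_smul_one,
    ← Real.exp_eq_exp_ℝ]

end Aux

theorem stmt1 {n : ℕ} (M : Matrix (Fin n) (Fin n) ℝ) :
    (∀ t : ℝ, 0 ≤ t → ∀ i j, 0 ≤ NormedSpace.exp (t • M) i j) ↔
      (∀ i j, i ≠ j → 0 ≤ M i j) := by
  constructor
  · -- forward direction
    intro h i j hij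
    letI : SeminormedRing (Matrix (Fin n) (Fin n) ℝ) := Matrix.linftyOpSemiNormedRing
    letI : NormedRing (Matrix (Fin n) (Fin n) ℝ) := Matrix.linftyOpNormedRing
    letI : NormedAlgebra ℝ (Matrix (Fin n) (Fin n) ℝ) := Matrix.linftyOpNormedAlgebra
    letI : CompleteSpace (Matrix (Fin n) (Fin n) ℝ) := FiniteDimensional.complete ℝ _
    have hd : HasDerivAt (fun t : ℝ => NormedSpace.exp (t • M)) M 0 := by
      have := hasDerivAt_exp_smul_const (𝕂 := ℝ) M 0
      simp only [zero_smul, NormedSpace.exp_zero, one_mul] at this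
      exact this
    let e : Matrix (Fin n) (Fin n) ℝ →L[ℝ] ℝ :=
      { toFun := fun B => B i j
        map_add' := fun _ _ => rfl
        map_smul' := fun _ _ => rfl
        cont := (continuous_apply j).comp (continuous_apply i) }
    have hd' : HasDerivAt (fun t : ℝ => NormedSpace.exp (t • M) i j) (M i j) 0 :=
      e.hasFDerivAt.comp_hasDerivAt (0 : ℝ) hd
    set g : ℝ → ℝ := fun t => NormedSpace.exp (t • M) i j with hg
    have hg0 : g 0 = 0 := by
      simp only [hg, zero_smul, NormedSpace.exp_zero]
      exact Matrix.one_apply_ne hij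
    have hslope : Filter.Tendsto (slope g 0) (nhdsWithin 0 (Set.Ioi 0)) (nhds (M i j)) :=
      (hasDerivAt_iff_tendsto_slope.mp hd').mono_left
        (nhdsWithin_mono 0 fun x hx => Set.mem_compl_singleton_iff.mpr (ne_of_gt hx))
    refine ge_of_tendsto hslope ?_
    filter_upwards [self_mem_nhdsWithin] with x hx
    have hx0 : (0 : ℝ) < x := hx
    have hgx : 0 ≤ g x := h x hx0.le i j
    rw [slope_def_field, hg0]
    simp only [sub_zero]
    exact div_nonneg hgx hx0.le
  · -- backward direction
    intro h t ht i j
    set c : ℝ := ∑ k, |M k k| with hc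
    have hc0 : 0 ≤ c := Finset.sum_nonneg fun _ _ => abs_nonneg _
    have hdiag : ∀ i, |M i i| ≤ c := fun i =>
      Finset.single_le_sum (f := fun k => |M k k|) (fun _ _ => abs_nonneg _) (Finset.mem_univ i)
    set A : Matrix (Fin n) (Fin n) ℝ := t • M + (t * c) • 1 with hA
    have hAnn : ∀ i j, 0 ≤ A i j := by
      intro a b
      by_cases hab : a = b
      · subst hab
        simp only [hA, Matrix.add_apply, Matrix.smul_apply, Matrix.one_apply_eq, smul_eq_mul,
          mul_one]
        have : -M a a ≤ c := (neg_le_abs _).trans (hdiag a)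
        nlinarith
      · simp only [hA, Matrix.add_apply, Matrix.smul_apply, Matrix.one_apply_ne hab, smul_eq_mul,
          mul_zero, add_zero]
        exact mul_nonneg ht (h a b hab)
    have hsplit : NormedSpace.exp (t • M) =
        NormedSpace.exp A * NormedSpace.exp ((-(t * c)) • (1 : Matrix (Fin n) (Fin n) ℝ)) := by
      rw [← Matrix.exp_add_of_commute]
      · congr 1
        rw [hA]
        module
      · exact (Commute.one_right _).smul_right _
    rw [hsplit, aux_exp_smul_one, Matrix.mul_apply]
    refine Finset.sum_nonneg fun k _ => mul_nonneg (aux_exp_entry_nonneg hAnn i k) ?_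
    rw [Matrix.smul_apply]
    refine smul_nonneg (Real.exp_nonneg _) ?_
    rw [Matrix.one_apply]
    split <;> norm_num
end

section
/- Let (Y_t)_{t ≥ 0} be a right-continuous non-negative supermartingale and Λ > 0, with V_t := exp(−Λ t) Y_t. Suppose moreover V_t ≥ l on the event A_t := {ω : X_t(ω) ∈ U} for some l > 0 (for some process X and set U). Then for all T ≥ 0, P(∃ t ≥ T, X_t ∈ U) ≤ E[Y_0] / (exp(Λ T) · l). -/
open MeasureTheory Filter
open scoped NNReal Topology

section Aux

variable {Ω : Type*} {m0 : MeasurableSpace Ω}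

open Classical in
/-- The process `Y ∘ t` stopped at the first index `j` where `c ≤ Y (t j)`. -/
noncomputable def stopY (Y : ℝ≥0 → Ω → ℝ) (t : ℕ → ℝ≥0) (c : ℝ) : ℕ → Ω → ℝ
  | 0 => Y (t 0)
  | (k+1) => fun ω => if ∃ j ≤ k, c ≤ Y (t j) ω then stopY Y t c k ω else Y (t (k+1)) ω

/-- Discrete maximal inequality for nonnegative supermartingales along a monotone time grid. -/
lemma key_maximal (μ : Measure Ω) [IsProbabilityMeasure μ] (ℱ : Filtration ℝ≥0 m0)
    (Y : ℝ≥0 → Ω → ℝ) (hsup : Supermartingale Y ℱ μ) (hnn : ∀ (t : ℝ≥0) ω, 0 ≤ Y t ω)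
    (c : ℝ) (t : ℕ → ℝ≥0) (hmono : Monotone t) (n : ℕ) :
    c * (μ {ω | ∃ j ≤ n, c ≤ Y (t j) ω}).toReal ≤ ∫ ω, Y (t 0) ω ∂μ := by
  classical
  set A : ℕ → Set Ω := fun k => {ω | ∃ j ≤ k, c ≤ Y (t j) ω} with hAdef
  have hA : ∀ k, MeasurableSet[ℱ (t k)] (A k) := by
    intro k
    have : A k = ⋃ j ∈ Finset.range (k+1), {ω | c ≤ Y (t j) ω} := by
      ext ω; simp [hAdef, Nat.lt_succ_iff]
    rw [this]
    refine MeasurableSet.biUnion (Finset.range (k+1)).countable_toSet (fun j hj => ?_)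
    have hj' : t j ≤ t k := hmono (Nat.lt_succ_iff.mp (Finset.mem_range.mp hj))
    exact ℱ.mono hj' _
      (measurableSet_le measurable_const (hsup.stronglyAdapted (t j)).measurable)
  have hA0 : ∀ k, MeasurableSet (A k) := fun k => ℱ.le (t k) _ (hA k)
  set G := stopY Y t c with hGdef
  have hGeq : ∀ k ω, ω ∉ A k → G k ω = Y (t k) ω := by
    intro k ω hω
    cases k with
    | zero => rfl
    | succ k =>
      have h' : ¬ ∃ j ≤ k, c ≤ Y (t j) ω := by
        intro ⟨j, hj, hc⟩; exact hω ⟨j, hj.trans (Nat.le_succ k), hc⟩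
      simp only [hGdef, stopY, if_neg h']
  have hGnn : ∀ k ω, 0 ≤ G k ω := by
    intro k
    induction k with
    | zero => exact fun ω => hnn _ ω
    | succ k ih =>
      intro ω
      simp only [hGdef, stopY]
      split
      · exact ih ω
      · exact hnn _ ω
  have hGc : ∀ k ω, ω ∈ A k → c ≤ G k ω := by
    intro k
    induction k with
    | zero =>
      rintro ω ⟨j, hj, hc⟩
      rw [Nat.le_zero] at hj
      subst hj
      exact hc
    | succ k ih =>
      rintro ω hω
      by_cases h : ∃ j ≤ k, c ≤ Y (t j) ω
      · simpa only [hGdef, stopY, if_pos h] using ih ω h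
      · simp only [hGdef, stopY, if_neg h]
        obtain ⟨j, hj, hc⟩ := hω
        rcases Nat.lt_succ_iff_lt_or_eq.mp (Nat.lt_succ_of_le hj) with hj' | rfl
        · exact absurd ⟨j, Nat.lt_succ_iff.mp hj', hc⟩ h
        · exact hc
  have hpw : ∀ k, G (k+1) = (A k).piecewise (G k) (Y (t (k+1))) := by
    intro k
    funext ω
    by_cases h : ω ∈ A k
    · simp only [hGdef, stopY, Set.piecewise, if_pos h]
      exact if_pos h
    · simp only [hGdef, stopY, Set.piecewise, if_neg h]
      exact if_neg h
  have hGint : ∀ k, Integrable (G k) μ := by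
    intro k
    induction k with
    | zero => exact hsup.integrable _
    | succ k ih =>
      rw [hpw k]
      exact Integrable.piecewise (hA0 k) ih.integrableOn (hsup.integrable _).integrableOn
  have hGle : ∀ k, ∫ ω, G k ω ∂μ ≤ ∫ ω, Y (t 0) ω ∂μ := by
    intro k
    induction k with
    | zero => exact le_rfl
    | succ k ih =>
      rw [hpw k, integral_piecewise (hA0 k) (hGint k).integrableOn
        (hsup.integrable _).integrableOn]
      have h1 : ∫ ω in (A k)ᶜ, Y (t (k+1)) ω ∂μ ≤ ∫ ω in (A k)ᶜ, Y (t k) ω ∂μ :=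
        hsup.setIntegral_le (hmono (Nat.le_succ k)) (hA k).compl
      have h2 : ∫ ω in (A k)ᶜ, Y (t k) ω ∂μ = ∫ ω in (A k)ᶜ, G k ω ∂μ :=
        setIntegral_congr_fun (hA0 k).compl (fun ω hω => (hGeq k ω hω).symm)
      calc ∫ ω in A k, G k ω ∂μ + ∫ ω in (A k)ᶜ, Y (t (k+1)) ω ∂μ
          ≤ ∫ ω in A k, G k ω ∂μ + ∫ ω in (A k)ᶜ, G k ω ∂μ := by
            gcongr _ + ?_
            exact h1.trans_eq h2
        _ = ∫ ω, G k ω ∂μ := integral_add_compl (hA0 k) (hGint k)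
        _ ≤ _ := ih
  calc c * (μ (A n)).toReal ≤ ∫ ω in A n, G n ω ∂μ :=
        by have := setIntegral_ge_of_const_le_real (hA0 n) (measure_ne_top μ _)
             (fun ω hω => hGc n ω hω) (hGint n).integrableOn
           simpa only [smul_eq_mul, mul_comm, measureReal_def] using this
    _ ≤ ∫ ω, G n ω ∂μ := setIntegral_le_integral (hGint n) (ae_of_all _ (hGnn n))
    _ ≤ ∫ ω, Y (t 0) ω ∂μ := hGle n

/-- Bound on the union of dyadic-grid events. -/
lemma union_bound (μ : Measure Ω) [IsProbabilityMeasure μ] (ℱ : Filtration ℝ≥0 m0)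
    (Y : ℝ≥0 → Ω → ℝ) (hsup : Supermartingale Y ℱ μ) (hnn : ∀ (t : ℝ≥0) ω, 0 ≤ Y t ω)
    (T : ℝ≥0) (c : ℝ) (hc : 0 < c) :
    μ (⋃ n : ℕ, {ω | ∃ i ≤ n * 2^n, c ≤ Y (T + (i : ℝ≥0) / 2^n) ω}) ≤
      ENNReal.ofReal ((∫ ω, Y 0 ω ∂μ) / c) := by
  set B : ℕ → Set Ω := fun n => {ω | ∃ i ≤ n * 2^n, c ≤ Y (T + (i : ℝ≥0) / 2^n) ω} with hBdef
  have hE : ∀ s : ℝ≥0, ∫ ω, Y s ω ∂μ ≤ ∫ ω, Y 0 ω ∂μ := by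
    intro s
    have := hsup.setIntegral_le (zero_le : (0:ℝ≥0) ≤ s) (MeasurableSet.univ)
    simpa [Measure.restrict_univ] using this
  have hBmeas : ∀ n, MeasurableSet (B n) := by
    intro n
    have : B n = ⋃ i ∈ Finset.range (n * 2^n + 1), {ω | c ≤ Y (T + (i : ℝ≥0) / 2^n) ω} := by
      ext ω; simp [hBdef, Nat.lt_succ_iff]
    rw [this]
    refine MeasurableSet.biUnion (Finset.range _).countable_toSet (fun i _ => ?_)
    exact measurableSet_le measurable_const
      (((hsup.stronglyAdapted _).measurable).mono (ℱ.le _) le_rfl)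
  have hBbound : ∀ n, μ (B n) ≤ ENNReal.ofReal ((∫ ω, Y 0 ω ∂μ) / c) := by
    intro n
    set N := n * 2^n with hN
    set t : ℕ → ℝ≥0 := fun j => T + ((min j N : ℕ) : ℝ≥0) / 2^n with htdef
    have hmono : Monotone t := by
      intro a b hab
      simp only [htdef]
      gcongr
    have hev : {ω | ∃ j ≤ N, c ≤ Y (t j) ω} = B n := by
      ext ω
      constructor
      · rintro ⟨j, hj, hc'⟩
        exact ⟨j, hj, by simpa only [htdef, min_eq_left hj] using hc'⟩
      · rintro ⟨i, hi, hc'⟩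
        exact ⟨i, hi, by simpa only [htdef, min_eq_left (show i ≤ N from hi)] using hc'⟩
    have hkey := key_maximal μ ℱ Y hsup hnn c t hmono N
    rw [hev] at hkey
    have ht0 : t 0 = T := by simp [htdef]
    rw [ht0] at hkey
    have hkey' : c * (μ (B n)).toReal ≤ ∫ ω, Y 0 ω ∂μ := hkey.trans (hE T)
    have h1 : (μ (B n)).toReal ≤ (∫ ω, Y 0 ω ∂μ) / c := by
      rw [le_div_iff₀ hc]
      linarith [hkey']
    calc μ (B n) = ENNReal.ofReal ((μ (B n)).toReal) :=
          (ENNReal.ofReal_toReal (measure_ne_top μ _)).symm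
      _ ≤ _ := ENNReal.ofReal_le_ofReal h1
  have hBsub : ∀ n, B n ⊆ B (n+1) := by
    rintro n ω ⟨i, hi, hc'⟩
    refine ⟨2 * i, ?_, ?_⟩
    · calc 2 * i ≤ 2 * (n * 2^n) := by omega
        _ = n * 2^(n+1) := by ring
        _ ≤ (n+1) * 2^(n+1) := by nlinarith [Nat.pow_pos (n := n+1) (by norm_num : 0 < 2)]
    · have : ((2 * i : ℕ) : ℝ≥0) / 2^(n+1) = (i : ℝ≥0) / 2^n := by
        push_cast
        rw [pow_succ]
        rw [div_eq_div_iff (by positivity) (by positivity)]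
        ring
      rwa [this]
  have hdir : Directed (· ⊆ ·) B :=
    directed_of_isDirected_le (fun a b hab => by
      induction hab with
      | refl => exact subset_rfl
      | step _ ih => exact ih.trans (hBsub _))
  rw [hdir.measure_iUnion]
  exact iSup_le hBbound

end Aux

theorem stmt6 {Ω : Type*} {m0 : MeasurableSpace Ω} (μ : Measure Ω)
    [IsProbabilityMeasure μ] (ℱ : Filtration ℝ≥0 m0) (Y : ℝ≥0 → Ω → ℝ)
    (hsup : Supermartingale Y ℱ μ)
    (hrc : ∀ ω, ∀ t : ℝ≥0, ContinuousWithinAt (fun s => Y s ω) (Set.Ici t) t)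
    (hnn : ∀ (t : ℝ≥0) ω, 0 ≤ Y t ω)
    (Λ l : ℝ) (hΛ : 0 < Λ) (hl : 0 < l)
    {E : Type*} (X : ℝ≥0 → Ω → E) (U : Set E)
    (hbar : ∀ (t : ℝ≥0) ω, X t ω ∈ U → l ≤ Real.exp (-(Λ * t)) * Y t ω)
    (T : ℝ≥0) :
    μ {ω | ∃ t : ℝ≥0, T ≤ t ∧ X t ω ∈ U} ≤
      ENNReal.ofReal ((∫ ω, Y 0 ω ∂μ) / (Real.exp (Λ * T) * l)) := by
  set c : ℝ := Real.exp (Λ * T) * l with hcdef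
  have hc : 0 < c := mul_pos (Real.exp_pos _) hl
  set E0 : ℝ := ∫ ω, Y 0 ω ∂μ with hE0def
  -- on the event, Y t ω ≥ c
  have hYc : ∀ (t : ℝ≥0) ω, T ≤ t → X t ω ∈ U → c ≤ Y t ω := by
    intro t ω hTt hXU
    have hle := hbar t ω hXU
    rw [Real.exp_neg] at hle
    have hpos := Real.exp_pos (Λ * (t : ℝ))
    have h1 : Real.exp (Λ * t) * l ≤ Y t ω := by
      calc Real.exp (Λ * t) * l
          ≤ Real.exp (Λ * t) * ((Real.exp (Λ * t))⁻¹ * Y t ω) :=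
            mul_le_mul_of_nonneg_left hle hpos.le
        _ = Y t ω := by field_simp
    refine le_trans ?_ h1
    have : Λ * (T : ℝ) ≤ Λ * (t : ℝ) :=
      mul_le_mul_of_nonneg_left (NNReal.coe_le_coe.mpr hTt) hΛ.le
    exact mul_le_mul_of_nonneg_right (Real.exp_le_exp.mpr this) hl.le
  -- inclusion into dyadic events
  have hincl : ∀ m : ℕ, {ω | ∃ t : ℝ≥0, T ≤ t ∧ X t ω ∈ U} ⊆
      ⋃ n : ℕ, {ω | ∃ i ≤ n * 2^n, c - 1/(m+1) ≤ Y (T + (i : ℝ≥0) / 2^n) ω} := by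
    intro m ω hω
    obtain ⟨t, hTt, hXU⟩ := hω
    set ε : ℝ := 1/(m+1) with hεdef
    have hε : 0 < ε := by positivity
    have hYt : c - ε < Y t ω := by
      have := hYc t ω hTt hXU; linarith
    -- right-continuity gives a dyadic point to the right of t where Y > c - ε
    have hnhds : (fun s => Y s ω) ⁻¹' Set.Ioi (c - ε) ∈ 𝓝[Set.Ici t] t :=
      hrc ω t (Ioi_mem_nhds hYt)
    rw [Metric.mem_nhdsWithin_iff] at hnhds
    obtain ⟨δ, hδ, hball⟩ := hnhds
    set r : ℝ := (t : ℝ) - (T : ℝ) with hrdef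
    have hr : 0 ≤ r := by
      simp only [hrdef, sub_nonneg]
      exact_mod_cast hTt
    obtain ⟨n₀, hn₀⟩ := exists_pow_lt_of_lt_one hδ (by norm_num : (1:ℝ)/2 < 1)
    set n : ℕ := max n₀ ⌈r⌉₊ with hndef
    have h2n : (0:ℝ) < 2^n := by positivity
    have hsmall : (1:ℝ)/2^n < δ := by
      have h1 : ((1:ℝ)/2)^n ≤ ((1:ℝ)/2)^n₀ :=
        pow_le_pow_of_le_one (by norm_num) (by norm_num) (le_max_left _ _)
      have h2 : ((1:ℝ)/2)^n = 1/2^n := by rw [div_pow, one_pow]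
      linarith [h1.trans_lt hn₀, h2 ▸ h1]
    set i : ℕ := ⌈r * 2^n⌉₊ with hidef
    have hiub : (i : ℝ) < r * 2^n + 1 := Nat.ceil_lt_add_one (by positivity)
    have hilb : r * 2^n ≤ (i : ℝ) := Nat.le_ceil _
    have hiN : i ≤ n * 2^n := by
      rw [hidef, Nat.ceil_le]
      push_cast
      have hrn : r ≤ (n : ℝ) := (Nat.le_ceil r).trans (by exact_mod_cast le_max_right n₀ ⌈r⌉₊)
      nlinarith
    set q : ℝ≥0 := T + (i : ℝ≥0) / 2^n with hqdef
    have hqcoe : (q : ℝ) = (T : ℝ) + (i : ℝ) / 2^n := by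
      rw [hqdef]
      push_cast
      ring
    have htq : t ≤ q := by
      rw [← NNReal.coe_le_coe, hqcoe]
      have : r ≤ (i : ℝ) / 2^n := by rw [le_div_iff₀ h2n]; linarith
      simp only [hrdef] at this
      linarith
    have hqlt : (q : ℝ) < (t : ℝ) + δ := by
      rw [hqcoe]
      have h3 : (i : ℝ) / 2^n < r + 1/2^n := by
        rw [div_lt_iff₀ h2n, add_mul, one_div, inv_mul_cancel₀ h2n.ne']
        exact hiub
      have : (T : ℝ) + (i:ℝ)/2^n < (T:ℝ) + r + 1/2^n := by linarith
      simp only [hrdef] at this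
      linarith [hsmall]
    have hqball : q ∈ Metric.ball t δ ∩ Set.Ici t := by
      constructor
      · rw [Metric.mem_ball, NNReal.dist_eq]
        rw [abs_of_nonneg (by rw [sub_nonneg]; exact_mod_cast htq)]
        linarith
      · exact htq
    have hYq : c - ε < Y q ω := hball hqball
    exact Set.mem_iUnion.mpr ⟨n, ⟨i, hiN, hYq.le⟩⟩
  -- combine
  have hev : ∀ᶠ m : ℕ in atTop, μ {ω | ∃ t : ℝ≥0, T ≤ t ∧ X t ω ∈ U} ≤
      ENNReal.ofReal (E0 / (c - 1/(m+1))) := by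
    have htend0 : Tendsto (fun m : ℕ => (1:ℝ)/(m+1)) atTop (𝓝 0) :=
      tendsto_one_div_add_atTop_nhds_zero_nat
    filter_upwards [htend0.eventually_lt_const hc] with m hm
    have hcm : 0 < c - 1/(m+1) := by linarith
    calc μ {ω | ∃ t : ℝ≥0, T ≤ t ∧ X t ω ∈ U}
        ≤ μ (⋃ n : ℕ, {ω | ∃ i ≤ n * 2^n, c - 1/(m+1) ≤ Y (T + (i : ℝ≥0) / 2^n) ω}) :=
          measure_mono (hincl m)
      _ ≤ ENNReal.ofReal (E0 / (c - 1/(m+1))) :=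
          union_bound μ ℱ Y hsup hnn T _ hcm
  have htend : Tendsto (fun m : ℕ => ENNReal.ofReal (E0 / (c - 1/(m+1)))) atTop
      (𝓝 (ENNReal.ofReal (E0 / c))) := by
    refine (ENNReal.continuous_ofReal.tendsto _).comp ?_
    have h1 : Tendsto (fun m : ℕ => c - 1/(m+1)) atTop (𝓝 c) := by
      have : Tendsto (fun m : ℕ => (1:ℝ)/(m+1)) atTop (𝓝 0) := tendsto_one_div_add_atTop_nhds_zero_nat
      simpa using (tendsto_const_nhds (x := c)).sub this
    exact (tendsto_const_nhds (x := E0)).div h1 hc.ne'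
  exact ge_of_tendsto htend hev
end

section
/- Let Λ, M ∈ ℝ^{m×m} be matrices such that all eigenvalues of Λ − M have positive real parts, and let γ ∈ ℝ^m be a positive vector. Suppose S := sup_{t ≥ 0} ‖exp(−Λ t)‖ < ∞. Then there exists T* ≥ 0 such that for all T ≥ T* and all t ≥ T, the componentwise inequality exp(−Λ(t−T)) exp(−(Λ−M) T) γ ≤ γ holds. -/
open Matrix
open scoped Nat NNReal ENNReal Topology

open NormedSpace in
lemma aux_mulVec_eigen {n : Type*} [Fintype n] [DecidableEq n]
    (B : Matrix n n ℂ) (v : n → ℂ) (lam : ℂ) (hv : B.mulVec v = lam • v) :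
    (exp B).mulVec v = Complex.exp lam • v := by
  letI : SeminormedRing (Matrix n n ℂ) := Matrix.linftyOpSemiNormedRing
  letI : NormedRing (Matrix n n ℂ) := Matrix.linftyOpNormedRing
  letI : NormedAlgebra ℂ (Matrix n n ℂ) := Matrix.linftyOpNormedAlgebra
  have hpow : ∀ k : ℕ, (B ^ k).mulVec v = (lam ^ k) • v := by
    intro k
    induction k with
    | zero => simp [Matrix.one_mulVec]
    | succ k ih =>
      rw [pow_succ, ← Matrix.mulVec_mulVec, hv, Matrix.mulVec_smul, ih, smul_smul, pow_succ]
      ring_nf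
  let L : Matrix n n ℂ →ₗ[ℂ] (n → ℂ) :=
    { toFun := fun X => X.mulVec v
      map_add' := fun X Y => Matrix.add_mulVec X Y v
      map_smul' := fun c X => Matrix.smul_mulVec c X v }
  let Lc : Matrix n n ℂ →L[ℂ] (n → ℂ) := ⟨L, L.continuous_of_finiteDimensional⟩
  have hsum : Summable fun k : ℕ => ((k ! : ℂ)⁻¹) • B ^ k := expSeries_summable' (𝕂 := ℂ) B
  have hsuml : Summable fun k : ℕ => ((k ! : ℂ)⁻¹) * lam ^ k := by
    simpa [smul_eq_mul] using expSeries_summable' (𝕂 := ℂ) lam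
  have key : (exp B).mulVec v = ∑' k : ℕ, (((k ! : ℂ)⁻¹) * lam ^ k) • v := by
    have h1 : (exp B).mulVec v = Lc (∑' k : ℕ, ((k ! : ℂ)⁻¹) • B ^ k) := by
      simp only [exp_eq_tsum ℂ]
      rfl
    rw [h1, Lc.map_tsum hsum]
    refine tsum_congr fun k => ?_
    rw [_root_.map_smul]
    show ((k ! : ℂ)⁻¹) • ((B ^ k).mulVec v) = _
    rw [hpow, smul_smul]
  rw [key, hsuml.tsum_smul_const]
  congr 1
  rw [Complex.exp_eq_exp_ℂ, exp_eq_tsum ℂ]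
  simp [smul_eq_mul]

open NormedSpace in
lemma aux_spectrum_exp {n : Type*} [Fintype n] [DecidableEq n]
    (B : Matrix n n ℂ) (μ : ℂ) (hμ : μ ∈ spectrum ℂ (exp B)) :
    ∃ lam ∈ spectrum ℂ B, μ = Complex.exp lam := by
  letI : SeminormedRing (Matrix n n ℂ) := Matrix.linftyOpSemiNormedRing
  letI : NormedRing (Matrix n n ℂ) := Matrix.linftyOpNormedRing
  letI : NormedAlgebra ℂ (Matrix n n ℂ) := Matrix.linftyOpNormedAlgebra
  have hcomm : Commute B (exp B) := (Commute.refl B).exp_right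
  have hμ' : μ ∈ spectrum ℂ (Matrix.toLin' (exp B)) := by
    rwa [show Matrix.toLin' (exp B) = Matrix.toLinAlgEquiv' (exp B) from rfl,
      AlgEquiv.spectrum_eq]
  have hev : Module.End.HasEigenvalue (Matrix.toLin' (exp B)) μ :=
    Module.End.hasEigenvalue_iff_mem_spectrum.mpr hμ'
  set E := Module.End.eigenspace (Matrix.toLin' (exp B)) μ with hE
  haveI : Nontrivial E := Submodule.nontrivial_iff_ne_bot.mpr hev
  have hinv : ∀ x ∈ E, Matrix.toLin' B x ∈ E := by
    intro x hx
    rw [hE, Module.End.mem_eigenspace_iff] at hx ⊢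
    have h2 : Matrix.toLin' (exp B) (Matrix.toLin' B x)
        = Matrix.toLin' B (Matrix.toLin' (exp B) x) := by
      rw [← LinearMap.comp_apply, ← Matrix.toLin'_mul, ← hcomm.eq, Matrix.toLin'_mul,
        LinearMap.comp_apply]
    rw [h2, hx, _root_.map_smul]
  let g : Module.End ℂ E := (Matrix.toLin' B).restrict hinv
  obtain ⟨lam, hlam⟩ := Module.End.exists_eigenvalue g
  obtain ⟨w, hw⟩ := hlam.exists_hasEigenvector
  have hw0 : (w : n → ℂ) ≠ 0 := by
    simpa [Submodule.coe_eq_zero] using hw.right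
  have hgw : Matrix.toLin' B (w : n → ℂ) = lam • (w : n → ℂ) := by
    have := hw.apply_eq_smul
    calc Matrix.toLin' B (w : n → ℂ) = ((g w : E) : n → ℂ) :=
          (LinearMap.restrict_coe_apply _ _ _).symm
    _ = ((lam • w : E) : n → ℂ) := by rw [this]
    _ = lam • (w : n → ℂ) := rfl
  have hBw : B.mulVec (w : n → ℂ) = lam • (w : n → ℂ) := by
    rwa [Matrix.toLin'_apply] at hgw
  refine ⟨lam, ?_, ?_⟩
  · have : Module.End.HasEigenvalue (Matrix.toLin' B) lam :=
      Module.End.hasEigenvalue_of_hasEigenvector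
        ⟨Module.End.mem_eigenspace_iff.mpr hgw, hw0⟩
    have hmem := Module.End.hasEigenvalue_iff_mem_spectrum.mp this
    rwa [show Matrix.toLin' B = Matrix.toLinAlgEquiv' B from rfl,
      AlgEquiv.spectrum_eq] at hmem
  · have hwE : (Matrix.toLin' (exp B)) (w : n → ℂ) = μ • (w : n → ℂ) :=
      Module.End.mem_eigenspace_iff.mp w.2
    rw [Matrix.toLin'_apply] at hwE
    have h3 := aux_mulVec_eigen B (w : n → ℂ) lam hBw
    have h4 : μ • (w : n → ℂ) = Complex.exp lam • (w : n → ℂ) := by rw [← hwE, h3]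
    exact smul_left_injective ℂ hw0 h4


open NormedSpace in
lemma aux_map_exp {n : ℕ} (X : Matrix (Fin n) (Fin n) ℝ) :
    (exp X).map (algebraMap ℝ ℂ) = exp (X.map (algebraMap ℝ ℂ)) := by
  letI : SeminormedRing (Matrix (Fin n) (Fin n) ℝ) := Matrix.linftyOpSemiNormedRing
  letI : NormedRing (Matrix (Fin n) (Fin n) ℝ) := Matrix.linftyOpNormedRing
  letI : NormedAlgebra ℝ (Matrix (Fin n) (Fin n) ℝ) := Matrix.linftyOpNormedAlgebra
  letI : NormedAlgebra ℚ (Matrix (Fin n) (Fin n) ℝ) := Matrix.linftyOpNormedAlgebra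
  letI : SeminormedRing (Matrix (Fin n) (Fin n) ℂ) := Matrix.linftyOpSemiNormedRing
  letI : NormedRing (Matrix (Fin n) (Fin n) ℂ) := Matrix.linftyOpNormedRing
  letI : NormedAlgebra ℝ (Matrix (Fin n) (Fin n) ℂ) := Matrix.linftyOpNormedAlgebra
  letI : NormedAlgebra ℂ (Matrix (Fin n) (Fin n) ℂ) := Matrix.linftyOpNormedAlgebra
  have hcont : Continuous fun A : Matrix (Fin n) (Fin n) ℝ => A.map (algebraMap ℝ ℂ) :=
    continuous_id.matrix_map (continuous_algebraMap ℝ ℂ)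
  have h1 := map_exp ((algebraMap ℝ ℂ).mapMatrix :
      Matrix (Fin n) (Fin n) ℝ →+* Matrix (Fin n) (Fin n) ℂ) hcont X
  calc (exp X).map (algebraMap ℝ ℂ) = (algebraMap ℝ ℂ).mapMatrix (exp X) := rfl
  _ = exp ((algebraMap ℝ ℂ).mapMatrix X) := h1
  _ = exp (X.map (algebraMap ℝ ℂ)) := by rw [RingHom.mapMatrix_apply]

open NormedSpace in
lemma aux_decay {n : ℕ} (hn : 0 < n) (A : Matrix (Fin n) (Fin n) ℂ)
    (hspec : ∀ μ ∈ spectrum ℂ (exp (-A)), ‖μ‖₊ < 1) {ε : ℝ} (hε : 0 < ε) :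
    ∃ T0 : ℝ, 0 ≤ T0 ∧ ∀ T, T0 ≤ T → ∀ i j, ‖exp ((-T) • A) i j‖ ≤ ε := by
  haveI : Nonempty (Fin n) := ⟨⟨0, hn⟩⟩
  letI : SeminormedRing (Matrix (Fin n) (Fin n) ℂ) := Matrix.linftyOpSemiNormedRing
  letI : NormedRing (Matrix (Fin n) (Fin n) ℂ) := Matrix.linftyOpNormedRing
  letI : NormedAlgebra ℂ (Matrix (Fin n) (Fin n) ℂ) := Matrix.linftyOpNormedAlgebra
  letI : NormedAlgebra ℚ (Matrix (Fin n) (Fin n) ℂ) := Matrix.linftyOpNormedAlgebra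
  haveI : Nontrivial (Matrix (Fin n) (Fin n) ℂ) := by
    refine nontrivial_of_ne 0 1 fun h => ?_
    have := congrFun (congrFun h ⟨0, hn⟩) ⟨0, hn⟩
    simp [Matrix.one_apply] at this
  -- entrywise bound by operator norm
  have hentry : ∀ (X : Matrix (Fin n) (Fin n) ℂ) (i j : Fin n), ‖X i j‖ ≤ ‖X‖ := by
    intro X i j
    have h1 : ‖X i j‖₊ ≤ ∑ j' : Fin n, ‖X i j'‖₊ :=
      Finset.single_le_sum (f := fun j' => ‖X i j'‖₊) (fun _ _ => zero_le)
        (Finset.mem_univ j)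
    have h2 : (∑ j' : Fin n, ‖X i j'‖₊) ≤ Finset.univ.sup fun i : Fin n => ∑ j' : Fin n, ‖X i j'‖₊ :=
      Finset.le_sup (f := fun i => ∑ j' : Fin n, ‖X i j'‖₊) (Finset.mem_univ i)
    have := h1.trans h2
    rw [Matrix.linfty_opNorm_def]
    exact_mod_cast this
  set a := exp (-A) with ha
  have hρ : spectralRadius ℂ a < (1 : ℝ≥0) := spectrum.spectralRadius_lt_of_forall_lt a hspec
  obtain ⟨c, hc1, hc2⟩ := exists_between hρ
  have hcne : c ≠ ⊤ := hc2.trans_le le_top |>.ne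
  have hev : ∀ᶠ k : ℕ in Filter.atTop, ((‖a ^ k‖₊ : ℝ≥0∞)) ^ (1 / (k : ℝ)) < c :=
    (spectrum.pow_nnnorm_pow_one_div_tendsto_nhds_spectralRadius a).eventually_lt_const hc1
  have hcr1 : c.toReal < 1 := by
    have := (ENNReal.toReal_lt_toReal hcne (by simp)).mpr hc2
    simpa using this
  have hbound : ∀ᶠ k : ℕ in Filter.atTop, ‖a ^ k‖ ≤ c.toReal ^ k := by
    filter_upwards [hev, Filter.eventually_ge_atTop 1] with k hk hk1
    have hk0 : (k : ℝ) ≠ 0 := by positivity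
    have h3 : ((‖a ^ k‖₊ : ℝ≥0∞)) ^ ((1 / (k : ℝ)) * (k : ℝ)) ≤ c ^ (k : ℝ) := by
      rw [ENNReal.rpow_mul]
      exact ENNReal.rpow_le_rpow hk.le (by positivity)
    rw [one_div, inv_mul_cancel₀ hk0, ENNReal.rpow_one] at h3
    have h4 : (‖a ^ k‖₊ : ℝ≥0∞).toReal ≤ (c ^ (k : ℝ)).toReal :=
      ENNReal.toReal_le_toReal (by simp) (by simp [ENNReal.rpow_natCast, ENNReal.pow_ne_top hcne]) |>.mpr h3
    rw [ENNReal.rpow_natCast, ENNReal.toReal_pow, ENNReal.coe_toReal, coe_nnnorm] at h4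
    exact h4
  have hto0 : Filter.Tendsto (fun k : ℕ => ‖a ^ k‖) Filter.atTop (nhds 0) :=
    squeeze_zero' (Filter.Eventually.of_forall fun k => norm_nonneg _) hbound
      (tendsto_pow_atTop_nhds_zero_of_lt_one ENNReal.toReal_nonneg hcr1)
  -- bound on [0,1]
  have hcont : Continuous fun s : ℝ => ‖exp ((-s) • A)‖ :=
    (exp_continuous.comp ((continuous_id.neg).smul continuous_const)).norm
  obtain ⟨x, -, hx'⟩ := isCompact_Icc.exists_isMaxOn (α := ℝ) (s := Set.Icc (0:ℝ) 1)
    ⟨0, by norm_num⟩ hcont.continuousOn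
  have hx := isMaxOn_iff.mp hx'
  set C := ‖exp ((-x) • A)‖ with hC
  have hC0 : 0 ≤ C := norm_nonneg _
  -- choose N
  have hsmall : ∀ᶠ k : ℕ in Filter.atTop, ‖a ^ k‖ ≤ ε / (C + 1) := by
    have : (0:ℝ) < ε / (C + 1) := by positivity
    filter_upwards [hto0.eventually (eventually_le_nhds this)] with k hk
    exact hk
  obtain ⟨N, hN⟩ := (hbound.and hsmall).exists_forall_of_atTop
  refine ⟨N, Nat.cast_nonneg N, fun T hT i j => ?_⟩
  have hT0 : (0:ℝ) ≤ T := le_trans (Nat.cast_nonneg N) hT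
  set k := ⌊T⌋₊ with hk
  have hkN : N ≤ k := Nat.le_floor hT
  set s := T - k with hs
  have hs0 : 0 ≤ s := sub_nonneg.mpr (Nat.floor_le hT0)
  have hs1 : s ≤ 1 := by
    have := (Nat.lt_floor_add_one T).le
    simp only [hs]
    linarith
  have hsplit : (-T) • A = (-s) • A + (-(k:ℝ)) • A := by
    rw [← add_smul]
    congr 1
    simp [hs]
    ring
  have hcomm : Commute ((-s) • A) ((-(k:ℝ)) • A) :=
    ((Commute.refl A).smul_left (-s)).smul_right (-(k:ℝ))
  have hprod : exp ((-T) • A) = exp ((-s) • A) * a ^ k := by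
    rw [hsplit, Matrix.exp_add_of_commute _ _ hcomm]
    congr 1
    have h5 : (-(k:ℝ)) • A = (k : ℕ) • (-A) := by
      rw [neg_smul, ← smul_neg, Nat.cast_smul_eq_nsmul]
    rw [h5, Matrix.exp_nsmul]
  calc ‖exp ((-T) • A) i j‖ ≤ ‖exp ((-T) • A)‖ := hentry _ i j
  _ = ‖exp ((-s) • A) * a ^ k‖ := by rw [hprod]
  _ ≤ ‖exp ((-s) • A)‖ * ‖a ^ k‖ := norm_mul_le _ _
  _ ≤ C * (ε / (C + 1)) := by
      apply mul_le_mul (hx s ⟨hs0, hs1⟩) (hN k hkN).2 (norm_nonneg _) hC0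
  _ ≤ ε := by
      rw [div_eq_inv_mul, ← mul_assoc]
      have : C * (C + 1)⁻¹ ≤ 1 := by
        rw [mul_inv_le_iff₀ (by positivity)]
        linarith
      nlinarith

theorem stmt8 {m : ℕ} (Λ M : Matrix (Fin m) (Fin m) ℝ)
    (heig : ∀ z ∈ spectrum ℂ ((Λ - M).map (algebraMap ℝ ℂ)), 0 < z.re)
    (γ : Fin m → ℝ) (hγ : ∀ i, 0 < γ i)
    (S : ℝ) (hS : ∀ t : ℝ, 0 ≤ t → ∀ i j, |NormedSpace.exp ((-t) • Λ) i j| ≤ S) :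
    ∃ Tstar : ℝ, 0 ≤ Tstar ∧ ∀ T, Tstar ≤ T → ∀ t, T ≤ t →
      (NormedSpace.exp ((-(t - T)) • Λ)).mulVec
        ((NormedSpace.exp ((-T) • (Λ - M))).mulVec γ) ≤ γ := by
  rcases Nat.eq_zero_or_pos m with hm | hm
  · refine ⟨0, le_refl 0, fun T hT t ht i => ?_⟩
    haveI : IsEmpty (Fin m) := by rw [hm]; infer_instance
    exact isEmptyElim i
  haveI hne : Nonempty (Fin m) := ⟨⟨0, hm⟩⟩
  have hm' : (0:ℝ) < m := by exact_mod_cast hm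
  set Ac := (Λ - M).map (algebraMap ℝ ℂ) with hAc
  have hS1 : (1:ℝ) ≤ S := by
    have h0 := hS 0 le_rfl ⟨0, hm⟩ ⟨0, hm⟩
    rw [neg_zero, zero_smul, NormedSpace.exp_zero] at h0
    simpa [Matrix.one_apply] using h0
  have hSpos : 0 < S := lt_of_lt_of_le one_pos hS1
  set G := ∑ k, γ k with hG
  have hGpos : 0 < G := Finset.sum_pos (fun i _ => hγ i) Finset.univ_nonempty
  set g0 := Finset.univ.inf' Finset.univ_nonempty γ with hg0
  have hg0pos : 0 < g0 := by
    rw [hg0, Finset.lt_inf'_iff]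
    exact fun i _ => hγ i
  set ε := g0 / (S * m * G) with hε
  have hεpos : 0 < ε := div_pos hg0pos (by positivity)
  have hspec : ∀ μ ∈ spectrum ℂ (NormedSpace.exp (-Ac)), ‖μ‖₊ < 1 := by
    intro μ hμ
    obtain ⟨lam, hlam, rfl⟩ := aux_spectrum_exp (-Ac) μ hμ
    have hneg : -lam ∈ spectrum ℂ Ac := by
      rw [← spectrum.neg_eq] at hlam
      simpa using hlam
    have hre := heig _ hneg
    have hlt : ‖Complex.exp lam‖ < 1 := by
      rw [Complex.norm_exp]
      apply Real.exp_lt_one_iff.mpr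
      simpa [Complex.neg_re] using hre
    exact_mod_cast hlt
  obtain ⟨T0, hT0, hdecay⟩ := aux_decay hm Ac hspec hεpos
  refine ⟨T0, hT0, fun T hT t ht => ?_⟩
  have hEnt : ∀ i j, |NormedSpace.exp ((-T) • (Λ - M)) i j| ≤ ε := by
    intro i j
    have hmap : ((-T) • (Λ - M)).map (algebraMap ℝ ℂ) = (-T) • Ac := by
      ext i' j'
      simp [Matrix.map_apply, hAc]
    have h1 : ((NormedSpace.exp ((-T) • (Λ - M))).map (algebraMap ℝ ℂ)) i j
        = NormedSpace.exp ((-T) • Ac) i j := by rw [aux_map_exp, hmap]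
    have h2 := hdecay T hT i j
    rw [← h1] at h2
    simpa [Matrix.map_apply] using h2
  set w := (NormedSpace.exp ((-T) • (Λ - M))).mulVec γ with hw
  have hwb : ∀ j, |w j| ≤ ε * G := by
    intro j
    have h1 : w j = ∑ k, NormedSpace.exp ((-T) • (Λ - M)) j k * γ k := by
      rw [hw]; simp [Matrix.mulVec, dotProduct]
    rw [h1]
    calc |∑ k, NormedSpace.exp ((-T) • (Λ - M)) j k * γ k|
        ≤ ∑ k, |NormedSpace.exp ((-T) • (Λ - M)) j k * γ k| :=
          Finset.abs_sum_le_sum_abs _ _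
    _ ≤ ∑ k, ε * γ k := by
        refine Finset.sum_le_sum fun k _ => ?_
        rw [abs_mul, abs_of_pos (hγ k)]
        exact mul_le_mul_of_nonneg_right (hEnt j k) (hγ k).le
    _ = ε * G := by rw [hG, Finset.mul_sum]
  intro i
  have hexp : (NormedSpace.exp ((-(t - T)) • Λ)).mulVec w i
      = ∑ j, NormedSpace.exp ((-(t - T)) • Λ) i j * w j := by
    simp [Matrix.mulVec, dotProduct]
  rw [hexp]
  have hSb := fun i j => hS (t - T) (by linarith) i j
  calc ∑ j, NormedSpace.exp ((-(t - T)) • Λ) i j * w j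
      ≤ ∑ j : Fin m, S * (ε * G) := by
        refine Finset.sum_le_sum fun j _ => ?_
        calc NormedSpace.exp ((-(t - T)) • Λ) i j * w j
            ≤ |NormedSpace.exp ((-(t - T)) • Λ) i j * w j| := le_abs_self _
        _ = |NormedSpace.exp ((-(t - T)) • Λ) i j| * |w j| := abs_mul _ _
        _ ≤ S * (ε * G) := mul_le_mul (hSb i j) (hwb j) (abs_nonneg _) hSpos.le
  _ = m * (S * (ε * G)) := by
        rw [Finset.sum_const, Finset.card_univ, Fintype.card_fin, nsmul_eq_mul]
  _ = g0 := by
        rw [hε]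
        field_simp
  _ ≤ γ i := Finset.inf'_le γ (Finset.mem_univ i)
end

section
/- Let Λ ∈ ℝ^{m×m} be essentially non-negative and let (V_t) be an ℝ^m-valued process such that each component of F_t := exp(Λ t) V_t is a right-continuous non-negative supermartingale. Then for every T ≥ 0, every positive vector γ ∈ ℝ^m, and every index i, P(∃ t ≥ T : V_t ≥ exp(−Λ t) γ componentwise) ≤ E[(V_0)_i] / γ_i. -/
open MeasureTheory Matrix Finset
open scoped NNReal ENNReal MeasureTheory ProbabilityTheory

section MatrixNonneg

variable {m : ℕ}

lemma pow_entry_nonneg (M : Matrix (Fin m) (Fin m) ℝ) (hM : ∀ i j, 0 ≤ M i j) :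
    ∀ (n : ℕ) i j, 0 ≤ (M ^ n) i j := by
  intro n
  induction n with
  | zero => intro i j; simp [pow_zero, Matrix.one_apply]; positivity
  | succ n ih =>
    intro i j
    rw [pow_succ, Matrix.mul_apply]
    exact Finset.sum_nonneg fun k _ => mul_nonneg (ih i k) (hM k j)

lemma exp_entry_nonneg_of_nonneg (M : Matrix (Fin m) (Fin m) ℝ) (hM : ∀ i j, 0 ≤ M i j) :
    ∀ i j, 0 ≤ NormedSpace.exp M i j := by
  letI : SeminormedRing (Matrix (Fin m) (Fin m) ℝ) := Matrix.linftyOpSemiNormedRing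
  letI : NormedRing (Matrix (Fin m) (Fin m) ℝ) := Matrix.linftyOpNormedRing
  letI : NormedAlgebra ℝ (Matrix (Fin m) (Fin m) ℝ) := Matrix.linftyOpNormedAlgebra
  intro i j
  have hs : Summable fun n : ℕ => ((n.factorial : ℝ)⁻¹ • M ^ n) :=
    NormedSpace.expSeries_summable' (𝕂 := ℝ) M
  have hsum : HasSum (fun n : ℕ => ((n.factorial : ℝ)⁻¹ • M ^ n)) (NormedSpace.exp M) := by
    rw [NormedSpace.exp_eq_tsum ℝ]
    exact hs.hasSum
  have hentry : HasSum (fun n : ℕ => ((n.factorial : ℝ)⁻¹ • M ^ n) i j)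
      (NormedSpace.exp M i j) := by
    exact hsum.map
      (AddMonoidHom.mk' (fun A : Matrix (Fin m) (Fin m) ℝ => A i j)
        (fun A B => rfl))
      ((continuous_apply j).comp (continuous_apply i))
  exact hentry.nonneg fun n => by
    simp only [Matrix.smul_apply, smul_eq_mul]
    exact mul_nonneg (by positivity) (pow_entry_nonneg M hM n i j)

end MatrixNonneg

lemma exp_entry_nonneg_essential {m : ℕ} (Λ : Matrix (Fin m) (Fin m) ℝ)
    (hΛ : ∀ i j, i ≠ j → 0 ≤ Λ i j) (t : ℝ) (ht : 0 ≤ t) :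
    ∀ i j, 0 ≤ NormedSpace.exp (t • Λ) i j := by
  set A := t • Λ with hA
  have hAoff : ∀ i j, i ≠ j → 0 ≤ A i j := fun i j h =>
    mul_nonneg ht (hΛ i j h)
  set α : ℝ := ∑ k, |A k k| with hα
  have hαk : ∀ k, |A k k| ≤ α := fun k =>
    Finset.single_le_sum (f := fun k => |A k k|) (fun _ _ => abs_nonneg _) (Finset.mem_univ k)
  have hM : ∀ i j, 0 ≤ (A + α • (1 : Matrix (Fin m) (Fin m) ℝ)) i j := by
    intro i j
    rcases eq_or_ne i j with rfl | hij
    · simp only [Matrix.add_apply, Matrix.smul_apply, Matrix.one_apply_eq, smul_eq_mul, mul_one]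
      have := hαk i
      have := neg_abs_le (A i i)
      linarith
    · simp only [Matrix.add_apply, Matrix.smul_apply, Matrix.one_apply_ne hij, smul_eq_mul,
        mul_zero, add_zero]
      exact hAoff i j hij
  have key := exp_entry_nonneg_of_nonneg _ hM
  have hsplit : A = (A + α • (1 : Matrix (Fin m) (Fin m) ℝ)) +
      algebraMap ℝ (Matrix (Fin m) (Fin m) ℝ) (-α) := by
    rw [Algebra.algebraMap_eq_smul_one]
    module
  have hcomm : Commute (A + α • (1 : Matrix (Fin m) (Fin m) ℝ))
      (algebraMap ℝ (Matrix (Fin m) (Fin m) ℝ) (-α)) :=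
    (Algebra.commutes (-α) _).symm
  have hexp : NormedSpace.exp A =
      NormedSpace.exp (A + α • (1 : Matrix (Fin m) (Fin m) ℝ)) *
        NormedSpace.exp (algebraMap ℝ (Matrix (Fin m) (Fin m) ℝ) (-α)) := by
    conv_lhs => rw [hsplit]
    exact Matrix.exp_add_of_commute _ _ hcomm
  have halg : NormedSpace.exp (algebraMap ℝ (Matrix (Fin m) (Fin m) ℝ) (-α)) =
      Real.exp (-α) • (1 : Matrix (Fin m) (Fin m) ℝ) := by
    letI : SeminormedRing (Matrix (Fin m) (Fin m) ℝ) := Matrix.linftyOpSemiNormedRing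
    letI : NormedRing (Matrix (Fin m) (Fin m) ℝ) := Matrix.linftyOpNormedRing
    letI : NormedAlgebra ℝ (Matrix (Fin m) (Fin m) ℝ) := Matrix.linftyOpNormedAlgebra
    have h := (NormedSpace.algebraMap_exp_comm (𝕂 := ℝ) (𝔸 := Matrix (Fin m) (Fin m) ℝ) (-α)).symm
    rw [Real.exp_eq_exp_ℝ, ← Algebra.algebraMap_eq_smul_one]
    exact h
  intro i j
  rw [hexp, halg]
  have : (NormedSpace.exp (A + α • (1 : Matrix (Fin m) (Fin m) ℝ)) *
      (Real.exp (-α) • (1 : Matrix (Fin m) (Fin m) ℝ))) i j =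
      Real.exp (-α) * NormedSpace.exp (A + α • (1 : Matrix (Fin m) (Fin m) ℝ)) i j := by
    rw [Matrix.mul_smul, Matrix.mul_one, Matrix.smul_apply, smul_eq_mul]
  rw [this]
  exact mul_nonneg (Real.exp_pos _).le (key i j)

lemma exp_mul_exp_neg {m : ℕ} (Λ : Matrix (Fin m) (Fin m) ℝ) (t : ℝ) :
    NormedSpace.exp (t • Λ) * NormedSpace.exp ((-t) • Λ) = 1 := by
  have hcomm : Commute (t • Λ) ((-t) • Λ) := ((Commute.refl Λ).smul_left t).smul_right (-t)
  rw [← Matrix.exp_add_of_commute _ _ hcomm]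
  have h0 : t • Λ + (-t) • Λ = 0 := by module
  rw [h0, NormedSpace.exp_zero]

lemma super_maximal {Ω : Type*} {m0 : MeasurableSpace Ω} {μ : Measure Ω}
    [IsFiniteMeasure μ] {𝒢 : Filtration ℕ m0} {f : ℕ → Ω → ℝ}
    (hf : Supermartingale f 𝒢 μ) (hnonneg : 0 ≤ f) (ε : ℝ≥0) (n : ℕ) :
    ε • μ {ω | (ε : ℝ) ≤ (range (n + 1)).sup' nonempty_range_add_one fun k => f k ω} ≤
      ENNReal.ofReal (μ[f 0]) := by
  set τ : Ω → WithTop ℕ := fun ω => ((hittingBtwn f {y : ℝ | ↑ε ≤ y} 0 n ω : ℕ) : WithTop ℕ) with hτdef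
  have hτ : IsStoppingTime 𝒢 τ := hf.stronglyAdapted.adapted.isStoppingTime_hittingBtwn measurableSet_Ici
  have hτ_le : ∀ ω, τ ω ≤ n := fun ω => WithTop.coe_le_coe.2 (hittingBtwn_le ω)
  have hint : Integrable (stoppedValue f τ) μ :=
    integrable_stoppedValue ℕ hτ hf.integrable hτ_le
  have hsv_nonneg : 0 ≤ᵐ[μ] stoppedValue f τ :=
    Filter.Eventually.of_forall fun ω => hnonneg _ _
  set A := {ω | (ε : ℝ) ≤ (range (n + 1)).sup' nonempty_range_add_one fun k => f k ω} with hA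
  have hAmeas : MeasurableSet A :=
    measurableSet_le measurable_const
      (Finset.measurable_range_sup'' fun k _ => (hf.stronglyMeasurable k).measurable.le (𝒢.le k))
  have hconst : ∀ ω ∈ A, (ε : ℝ) ≤ stoppedValue f τ ω := by
    intro ω hω
    simp_rw [hA, Set.mem_setOf_eq, le_sup'_iff, mem_range, Nat.lt_succ_iff] at hω
    refine stoppedValue_hittingBtwn_mem ?_
    simp only [Set.mem_setOf_eq, exists_prop]
    obtain ⟨j, hj₁, hj₂⟩ := hω
    exact ⟨j, by simpa using hj₁, hj₂⟩
  -- ε • μ A ≤ ∫_A stoppedValue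
  have h1 : ε • μ A ≤ ENNReal.ofReal (∫ ω in A, stoppedValue f τ ω ∂μ) := by
    have h : ε • (μ A).toReal ≤ ∫ ω in A, stoppedValue f τ ω ∂μ := by
      have h0 := setIntegral_ge_of_const_le hAmeas (measure_ne_top _ _) hconst hint.integrableOn
      exact le_trans (le_of_eq ((NNReal.smul_def ε _).trans ((smul_eq_mul _ _).trans (mul_comm _ _)))) h0
    rw [ENNReal.le_ofReal_iff_toReal_le, ENNReal.toReal_smul]
    · exact h
    · exact ENNReal.mul_ne_top (by simp) (measure_ne_top _ _)
    · exact le_trans (mul_nonneg ε.coe_nonneg ENNReal.toReal_nonneg) h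
  -- ∫_A ≤ ∫
  have h2 : ∫ ω in A, stoppedValue f τ ω ∂μ ≤ ∫ ω, stoppedValue f τ ω ∂μ :=
    setIntegral_le_integral hint hsv_nonneg
  -- ∫ stoppedValue ≤ ∫ f 0
  have h3 : ∫ ω, stoppedValue f τ ω ∂μ ≤ μ[f 0] := by
    have hneg := hf.neg.expected_stoppedValue_mono (isStoppingTime_const 𝒢 0) hτ
      (fun ω => zero_le) hτ_le
    have e1 : stoppedValue (-f) (fun _ => ((0 : ℕ) : WithTop ℕ)) = fun ω => -(f 0 ω) := rfl
    have e2 : stoppedValue (-f) τ = fun ω => -(stoppedValue f τ ω) := rfl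
    rw [stoppedValue_const, e2] at hneg
    simp only [Pi.neg_apply, integral_neg] at hneg
    exact le_of_neg_le_neg hneg
  calc ε • μ A ≤ ENNReal.ofReal (∫ ω in A, stoppedValue f τ ω ∂μ) := h1
    _ ≤ ENNReal.ofReal (μ[f 0]) := ENNReal.ofReal_le_ofReal (h2.trans h3)

lemma finset_maximal {Ω : Type*} {m0 : MeasurableSpace Ω} {μ : Measure Ω}
    [IsFiniteMeasure μ] (ℱ : Filtration ℝ≥0 m0) (F : ℝ≥0 → Ω → ℝ)
    (hF : Supermartingale F ℱ μ) (hFnn : ∀ t ω, 0 ≤ F t ω)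
    (s : Finset ℝ≥0) (hs : s.Nonempty) (ε : ℝ≥0) :
    ε • μ {ω | ∃ x ∈ s, (ε : ℝ) ≤ F x ω} ≤ ENNReal.ofReal (∫ ω, F 0 ω ∂μ) := by
  classical
  set n := s.card with hn
  have hn0 : 0 < n := Finset.card_pos.2 hs
  set emb := s.orderEmbOfFin (rfl : s.card = n) with hemb
  set u : ℕ → ℝ≥0 := fun k => emb ⟨min k (n - 1), lt_of_le_of_lt (min_le_right _ _)
    (Nat.pred_lt hn0.ne')⟩ with hu
  have humono : Monotone u := by
    intro k l hkl
    exact emb.monotone (by simp [Fin.mk_le_mk, min_le_min_right _ hkl])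
  set 𝒢 : Filtration ℕ m0 :=
    { seq := fun k => ℱ (u k)
      mono' := fun k l h => ℱ.mono (humono h)
      le' := fun k => ℱ.le _ } with h𝒢
  set g : ℕ → Ω → ℝ := fun k => F (u k) with hg
  have hgsuper : Supermartingale g 𝒢 μ :=
    ⟨fun k => hF.stronglyAdapted (u k), fun k l h => hF.2.1 (u k) (u l) (humono h),
      fun k => hF.integrable (u k)⟩
  have hgnn : 0 ≤ g := fun k ω => hFnn _ _
  have key := super_maximal hgsuper hgnn ε (n - 1)
  have hrange : n - 1 + 1 = n := Nat.succ_pred_eq_of_pos hn0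
  have hsets : {ω | (ε : ℝ) ≤ (Finset.range (n - 1 + 1)).sup' nonempty_range_add_one
      fun k => g k ω} = {ω | ∃ x ∈ s, (ε : ℝ) ≤ F x ω} := by
    ext ω
    simp only [Set.mem_setOf_eq, Finset.le_sup'_iff, Finset.mem_range, hrange]
    constructor
    · rintro ⟨k, hk, hkω⟩
      exact ⟨u k, Finset.orderEmbOfFin_mem _ _ _, hkω⟩
    · rintro ⟨x, hx, hxω⟩
      have : x ∈ Set.range emb := by
        rw [Finset.range_orderEmbOfFin]
        exact_mod_cast hx
      obtain ⟨⟨k, hk⟩, rfl⟩ := this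
      refine ⟨k, hk, ?_⟩
      have : u k = emb ⟨k, hk⟩ := by
        simp only [hu]
        congr 1
        exact Fin.mk_eq_mk.2 (min_eq_left (Nat.le_pred_of_lt hk))
      show (ε : ℝ) ≤ F (u k) ω
      rwa [this]
  have hint : ∫ ω, g 0 ω ∂μ ≤ ∫ ω, F 0 ω ∂μ := by
    have := hF.setIntegral_le (zero_le : (0 : ℝ≥0) ≤ u 0) (MeasurableSet.univ)
    simpa [setIntegral_univ] using this
  calc ε • μ {ω | ∃ x ∈ s, (ε : ℝ) ≤ F x ω}
      = ε • μ {ω | (ε : ℝ) ≤ (Finset.range (n - 1 + 1)).sup' nonempty_range_add_one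
        fun k => g k ω} := by rw [hsets]
    _ ≤ ENNReal.ofReal (μ[g 0]) := key
    _ ≤ ENNReal.ofReal (∫ ω, F 0 ω ∂μ) := ENNReal.ofReal_le_ofReal hint

lemma countable_maximal {Ω : Type*} {m0 : MeasurableSpace Ω} {μ : Measure Ω}
    [IsFiniteMeasure μ] (ℱ : Filtration ℝ≥0 m0) (F : ℝ≥0 → Ω → ℝ)
    (hF : Supermartingale F ℱ μ) (hFnn : ∀ t ω, 0 ≤ F t ω)
    (e : ℕ → ℝ≥0) (ε : ℝ≥0) :
    (ε : ℝ≥0∞) * μ (⋃ n, {ω | (ε : ℝ) ≤ F (e n) ω}) ≤ ENNReal.ofReal (∫ ω, F 0 ω ∂μ) := by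
  set A : ℕ → Set Ω := fun n => {ω | (ε : ℝ) ≤ F (e n) ω} with hA
  rw [measure_iUnion_eq_iSup_accumulate, ENNReal.mul_iSup]
  refine iSup_le fun N => ?_
  have hacc : Set.accumulate A N = {ω | ∃ x ∈ (Finset.range (N + 1)).image e,
      (ε : ℝ) ≤ F x ω} := by
    ext ω
    simp only [Set.mem_accumulate, hA, Set.mem_setOf_eq, Finset.mem_image,
      Finset.mem_range, Nat.lt_succ_iff]
    constructor
    · rintro ⟨k, hk, hkω⟩; exact ⟨e k, ⟨k, hk, rfl⟩, hkω⟩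
    · rintro ⟨x, ⟨k, hk, rfl⟩, hkω⟩; exact ⟨k, hk, hkω⟩
  rw [hacc]
  have := finset_maximal ℱ F hF hFnn ((Finset.range (N + 1)).image e)
    (Finset.Nonempty.image ⟨0, by simp⟩ e) ε
  simpa [ENNReal.smul_def] using this

theorem stmt12 {Ω : Type*} {m0 : MeasurableSpace Ω} (μ : Measure Ω)
    [IsProbabilityMeasure μ] (ℱ : Filtration ℝ≥0 m0)
    {m : ℕ} (Λ : Matrix (Fin m) (Fin m) ℝ)
    (hΛ : ∀ i j, i ≠ j → 0 ≤ Λ i j)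
    (V : ℝ≥0 → Ω → Fin m → ℝ)
    (hsup : ∀ i, Supermartingale
      (fun (t : ℝ≥0) ω => (NormedSpace.exp ((t : ℝ) • Λ)).mulVec (V t ω) i) ℱ μ)
    (hrc : ∀ i ω, ∀ t : ℝ≥0, ContinuousWithinAt
      (fun s : ℝ≥0 => (NormedSpace.exp ((s : ℝ) • Λ)).mulVec (V s ω) i) (Set.Ici t) t)
    (hnn : ∀ (t : ℝ≥0) ω i, 0 ≤ (NormedSpace.exp ((t : ℝ) • Λ)).mulVec (V t ω) i)
    (T : ℝ≥0) (γ : Fin m → ℝ) (hγ : ∀ i, 0 < γ i) (i : Fin m) :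
    μ {ω | ∃ t : ℝ≥0, T ≤ t ∧ (NormedSpace.exp ((-(t : ℝ)) • Λ)).mulVec γ ≤ V t ω} ≤
      ENNReal.ofReal ((∫ ω, V 0 ω i ∂μ) / γ i) := by
  classical
  set F : ℝ≥0 → Ω → ℝ :=
    fun t ω => (NormedSpace.exp ((t : ℝ) • Λ)).mulVec (V t ω) i with hFdef
  have hFsup : Supermartingale F ℱ μ := hsup i
  have hFnn : ∀ t ω, 0 ≤ F t ω := fun t ω => hnn t ω i
  set c : ℝ := γ i with hc
  have hc0 : 0 < c := hγ i
  set I : ℝ := ∫ ω, V 0 ω i ∂μ with hI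
  have hIF : ∫ ω, F 0 ω ∂μ = I := by
    have : F 0 = fun ω => V 0 ω i := by
      funext ω
      simp only [hFdef, NNReal.coe_zero, zero_smul, NormedSpace.exp_zero, Matrix.one_mulVec]
    rw [this]
  set e : ℕ → ℝ≥0 := fun n => Real.toNNReal (((Denumerable.eqv ℚ).symm n : ℚ) : ℝ) with he
  set A := {ω | ∃ t : ℝ≥0, T ≤ t ∧
    (NormedSpace.exp ((-(t : ℝ)) • Λ)).mulVec γ ≤ V t ω} with hA
  -- first: on A, F t ω ≥ c for the witness t
  have hkey : ∀ ω ∈ A, ∀ c' : ℝ, c' < c → ∃ n, c' ≤ F (e n) ω := by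
    rintro ω ⟨t, hTt, hle⟩ c' hc'
    have hFt : c ≤ F t ω := by
      have hexp := exp_entry_nonneg_essential Λ hΛ (t : ℝ) t.coe_nonneg
      have h1 : (NormedSpace.exp ((t : ℝ) • Λ)).mulVec
          ((NormedSpace.exp ((-(t : ℝ)) • Λ)).mulVec γ) i ≤ F t ω := by
        simp only [hFdef, Matrix.mulVec, dotProduct]
        exact Finset.sum_le_sum fun j _ =>
          mul_le_mul_of_nonneg_left (hle j) (hexp i j)
      have h2 : (NormedSpace.exp ((t : ℝ) • Λ)).mulVec
          ((NormedSpace.exp ((-(t : ℝ)) • Λ)).mulVec γ) = γ := by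
        rw [Matrix.mulVec_mulVec, exp_mul_exp_neg, Matrix.one_mulVec]
      rw [h2] at h1
      exact h1
    -- right continuity
    have hlt : c' < F t ω := lt_of_lt_of_le hc' hFt
    have hnhds : {x : ℝ | c' < x} ∈ nhds (F t ω) := isOpen_Ioi.mem_nhds hlt
    have hmem := (hrc i ω t) hnhds
    rw [Filter.mem_map, Metric.mem_nhdsWithin_iff] at hmem
    obtain ⟨δ, hδ, hsub⟩ := hmem
    obtain ⟨q, hq1, hq2⟩ := exists_rat_btwn (show (t : ℝ) < (t : ℝ) + δ by linarith)
    have hq0 : (0 : ℝ) ≤ (q : ℝ) := le_of_lt (lt_of_le_of_lt t.coe_nonneg hq1)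
    set x : ℝ≥0 := Real.toNNReal (q : ℝ) with hx
    have hxq : (x : ℝ) = (q : ℝ) := Real.coe_toNNReal _ hq0
    have hxball : x ∈ Metric.ball t δ ∩ Set.Ici t := by
      constructor
      · rw [Metric.mem_ball, NNReal.dist_eq, hxq]
        rw [abs_of_nonneg (by linarith)]
        linarith
      · rw [Set.mem_Ici, ← NNReal.coe_le_coe, hxq]
        exact le_of_lt hq1
    have hFx : c' < F x ω := hsub hxball
    refine ⟨(Denumerable.eqv ℚ) q, ?_⟩
    have hex : e ((Denumerable.eqv ℚ) q) = x := by
      simp only [he, Equiv.symm_apply_apply, hx]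
    rw [hex]
    exact le_of_lt hFx
  -- for each 0 < c' < c, bound the measure
  have hbound : ∀ c' : ℝ, 0 < c' → c' < c → μ A ≤ ENNReal.ofReal (I / c') := by
    intro c' hc'0 hc'c
    set ε : ℝ≥0 := Real.toNNReal c' with hε
    have hεc : (ε : ℝ) = c' := Real.coe_toNNReal _ hc'0.le
    have hsubA : A ⊆ ⋃ n, {ω | (ε : ℝ) ≤ F (e n) ω} := by
      intro ω hω
      obtain ⟨n, hn⟩ := hkey ω hω (ε : ℝ) (by rw [hεc]; exact hc'c)
      exact Set.mem_iUnion.2 ⟨n, hn⟩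
    have h := countable_maximal ℱ F hFsup hFnn e ε
    rw [hIF] at h
    have hμ : (ε : ℝ≥0∞) * μ A ≤ ENNReal.ofReal I :=
      le_trans (mul_le_mul_right (measure_mono hsubA) _) h
    have hε0 : (ε : ℝ≥0∞) ≠ 0 := by
      simp only [ne_eq, ENNReal.coe_eq_zero]
      exact (Real.toNNReal_pos.2 hc'0).ne'
    have : μ A ≤ ENNReal.ofReal I / (ε : ℝ≥0∞) :=
      (ENNReal.le_div_iff_mul_le (Or.inl hε0) (Or.inl ENNReal.coe_ne_top)).2
        (by rwa [mul_comm])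
    have hcoe : (ε : ℝ≥0∞) = ENNReal.ofReal c' := by
      rw [hε]; rfl
    rwa [hcoe, ← ENNReal.ofReal_div_of_pos hc'0] at this
  -- take the limit c' → c from the left
  have htends : Filter.Tendsto (fun x : ℝ => ENNReal.ofReal (I / x))
      (nhdsWithin c (Set.Iio c)) (nhds (ENNReal.ofReal (I / c))) := by
    refine (ENNReal.continuous_ofReal.tendsto _).comp ?_
    exact (Filter.Tendsto.div tendsto_const_nhds Filter.tendsto_id hc0.ne').mono_left
      nhdsWithin_le_nhds
  have hev : ∀ᶠ x in nhdsWithin c (Set.Iio c), μ A ≤ ENNReal.ofReal (I / x) :=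
    Filter.eventually_of_mem (Ioo_mem_nhdsLT_of_mem ⟨hc0, le_rfl⟩)
      (fun x hx => hbound x hx.1 hx.2)
  exact ge_of_tendsto htends hev
end

section
/- Let M ∈ ℝ^{m×m} be essentially non-negative with all eigenvalues having positive real part, and let l ∈ ℝ^m be a positive vector. Then for every index i, (exp(M T) l)_i → +∞ as T → ∞. -/
open Matrix Filter

namespace StmtAux

variable {n : Type*} [Fintype n] [DecidableEq n]

theorem exp_entry (A : Matrix n n ℝ) (k j : n) :
    HasSum (fun p : ℕ => ((p.factorial : ℝ))⁻¹ * (A ^ p) k j)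
      (NormedSpace.exp A k j) := by
  letI : NormedRing (Matrix n n ℝ) := Matrix.linftyOpNormedRing
  letI : NormedAlgebra ℝ (Matrix n n ℝ) := Matrix.linftyOpNormedAlgebra
  have hs := NormedSpace.exp_series_hasSum_exp' (𝕂 := ℝ) A
  have hcont : Continuous (fun X : Matrix n n ℝ => X k j) :=
    (continuous_apply j).comp (continuous_apply k)
  let e : Matrix n n ℝ →+ ℝ :=
    { toFun := fun X => X k j
      map_zero' := rfl
      map_add' := fun _ _ => rfl }
  exact hs.map e hcont

theorem pow_entry_nonneg {A : Matrix n n ℝ} (hA : ∀ k j, 0 ≤ A k j) :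
    ∀ (p : ℕ) (k j : n), 0 ≤ (A ^ p) k j := by
  intro p
  induction p with
  | zero =>
    intro k j
    by_cases h : k = j <;> simp [pow_zero, Matrix.one_apply, h]
  | succ p ih =>
    intro k j
    rw [pow_succ, Matrix.mul_apply]
    exact Finset.sum_nonneg fun q _ => mul_nonneg (ih k q) (hA q j)

theorem exp_entry_nonneg {A : Matrix n n ℝ} (hA : ∀ k j, 0 ≤ A k j) (k j : n) :
    0 ≤ NormedSpace.exp A k j := by
  rw [← (exp_entry A k j).tsum_eq]
  exact tsum_nonneg fun p =>
    mul_nonneg (inv_nonneg.2 (Nat.cast_nonneg _)) (pow_entry_nonneg hA p k j)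

theorem exp_entry_le {A : Matrix n n ℝ} (hA : ∀ k j, 0 ≤ A k j) (p : ℕ) (k j : n) :
    ((p.factorial : ℝ))⁻¹ * (A ^ p) k j ≤ NormedSpace.exp A k j := by
  rw [← (exp_entry A k j).tsum_eq]
  exact Summable.le_tsum (exp_entry A k j).summable p fun q _ =>
    mul_nonneg (inv_nonneg.2 (Nat.cast_nonneg _)) (pow_entry_nonneg hA q k j)

theorem exp_eq_smul_exp_sub (M : Matrix n n ℝ) (c : ℝ) :
    NormedSpace.exp M = Real.exp c • NormedSpace.exp (M - c • 1) := by
  have hcomm : Commute (c • (1 : Matrix n n ℝ)) (M - c • 1) :=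
    (Commute.one_left (M - c • 1)).smul_left c
  have h := Matrix.exp_add_of_commute (c • (1 : Matrix n n ℝ)) (M - c • 1) hcomm
  rw [add_sub_cancel] at h
  have hdiag : (c • (1 : Matrix n n ℝ)) = Matrix.diagonal (fun _ => c) := by
    ext a b
    by_cases hab : a = b <;> simp [Matrix.one_apply, Matrix.diagonal, hab]
  have h2 : NormedSpace.exp (c • (1 : Matrix n n ℝ)) = Real.exp c • (1 : Matrix n n ℝ) := by
    rw [hdiag, Matrix.exp_diagonal]
    ext a b
    by_cases hab : a = b <;>
      simp [Matrix.diagonal, Matrix.one_apply, hab, Real.exp_eq_exp_ℝ]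
  rw [h, h2, smul_mul_assoc, one_mul]

end StmtAux

set_option maxHeartbeats 1600000 in
theorem stmt16 {m : ℕ} (M : Matrix (Fin m) (Fin m) ℝ)
    (hess : ∀ i j, i ≠ j → 0 ≤ M i j)
    (heig : ∀ z ∈ spectrum ℂ (M.map (algebraMap ℝ ℂ)), 0 < z.re)
    (l : Fin m → ℝ) (hl : ∀ i, 0 < l i) (i : Fin m) :
    Tendsto (fun T : ℝ => (NormedSpace.exp (T • M)).mulVec l i) atTop atTop := by
  classical
  haveI hne : Nonempty (Fin m) := ⟨i⟩
  set c : ℝ := Finset.univ.inf' Finset.univ_nonempty (fun j => M j j) with hc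
  set N : Matrix (Fin m) (Fin m) ℝ := M - c • 1 with hNdef
  have hNnn : ∀ k j, 0 ≤ N k j := by
    intro k j
    by_cases h : k = j
    · subst h
      have : c ≤ M k k := Finset.inf'_le _ (Finset.mem_univ k)
      simp only [hNdef, Matrix.sub_apply, Matrix.smul_apply, Matrix.one_apply_eq,
        smul_eq_mul, mul_one]
      linarith
    · have := hess k j h
      simp only [hNdef, Matrix.sub_apply, Matrix.smul_apply, Matrix.one_apply_ne h,
        smul_eq_mul, mul_zero, sub_zero]
      exact this
  have hNoff : ∀ k j, k ≠ j → N k j = M k j := by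
    intro k j h
    simp [hNdef, Matrix.sub_apply, Matrix.smul_apply, Matrix.one_apply_ne h]
  have hTN : ∀ T : ℝ, 0 ≤ T → ∀ k j, 0 ≤ (T • N) k j := by
    intro T hT k j
    simpa [Matrix.smul_apply, smul_eq_mul] using mul_nonneg hT (hNnn k j)
  have hsplit : ∀ T : ℝ,
      NormedSpace.exp (T • M) = Real.exp (T * c) • NormedSpace.exp (T • N) := by
    intro T
    have h := StmtAux.exp_eq_smul_exp_sub (T • M) (T * c)
    have h2 : T • M - (T * c) • (1 : Matrix (Fin m) (Fin m) ℝ) = T • N := by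
      rw [hNdef, smul_sub, smul_smul]
    rw [h2] at h
    exact h
  have hexpnn : ∀ T : ℝ, 0 ≤ T → ∀ k j, 0 ≤ NormedSpace.exp (T • M) k j := by
    intro T hT k j
    rw [hsplit T]
    simpa [Matrix.smul_apply, smul_eq_mul] using
      mul_nonneg (Real.exp_nonneg (T * c)) (StmtAux.exp_entry_nonneg (hTN T hT) k j)
  -- the set of indices reachable from i
  set P : Fin m → Prop := fun j => ∃ p : ℕ, 0 < (N ^ p) i j with hPdef
  have hPi : P i := ⟨0, by simp [Matrix.one_apply]⟩
  have hblockM : ∀ k j, P k → ¬ P j → M k j = 0 := by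
    intro k j hk hj
    have hkj : k ≠ j := by
      rintro rfl; exact hj hk
    rcases hk with ⟨p, hp⟩
    by_contra hne0
    have hpos : 0 < M k j := lt_of_le_of_ne (hess k j hkj) (Ne.symm hne0)
    have hNkj : 0 < N k j := by rw [hNoff k j hkj]; exact hpos
    refine hj ⟨p + 1, ?_⟩
    rw [pow_succ, Matrix.mul_apply]
    exact Finset.sum_pos'
      (fun r _ => mul_nonneg (StmtAux.pow_entry_nonneg hNnn p i r) (hNnn r j))
      ⟨k, Finset.mem_univ k, mul_pos hp hNkj⟩
  have hpowzero : ∀ (p : ℕ) (k q : Fin m), P k → ¬ P q → (M ^ p) k q = 0 := by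
    intro p
    induction p with
    | zero =>
      intro k q hk hq
      have hkq : k ≠ q := by rintro rfl; exact hq hk
      simp [Matrix.one_apply, hkq]
    | succ p ih =>
      intro k q hk hq
      rw [pow_succ, Matrix.mul_apply]
      refine Finset.sum_eq_zero fun r _ => ?_
      by_cases hr : P r
      · rw [hblockM r q hr hq, mul_zero]
      · rw [ih k r hk hr, zero_mul]
  haveI : Nonempty {x : Fin m // P x} := ⟨⟨i, hPi⟩⟩
  set A : Matrix {x : Fin m // P x} {x : Fin m // P x} ℝ :=
    M.submatrix Subtype.val Subtype.val with hAdef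
  have hApow : ∀ (p : ℕ) (k j : {x : Fin m // P x}), (A ^ p) k j = (M ^ p) k.1 j.1 := by
    intro p
    induction p with
    | zero =>
      intro k j
      by_cases h : k = j
      · subst h; simp [Matrix.one_apply]
      · have h2 : k.1 ≠ j.1 := fun hh => h (Subtype.ext hh)
        simp [Matrix.one_apply, h, h2]
    | succ p ih =>
      intro k j
      rw [pow_succ, Matrix.mul_apply, pow_succ, Matrix.mul_apply]
      calc (∑ q : {x : Fin m // P x}, (A ^ p) k q * A q j)
          = ∑ q : {x : Fin m // P x}, (M ^ p) k.1 q.1 * M q.1 j.1 :=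
            Finset.sum_congr rfl fun q _ => by rw [ih, hAdef, Matrix.submatrix_apply]
        _ = ∑ q ∈ Finset.univ.filter P, (M ^ p) k.1 q * M q j.1 :=
            (Finset.sum_subtype (p := P) (F := inferInstance) (Finset.univ.filter P)
              (fun x => by simp) (fun q => (M ^ p) k.1 q * M q j.1)).symm
        _ = ∑ q : Fin m, (M ^ p) k.1 q * M q j.1 := by
            refine Finset.sum_filter_of_ne fun q _ hne => ?_
            by_contra hq
            exact hne (by rw [hpowzero p k.1 q k.2 hq, zero_mul])
  have hAexp : ∀ (T : ℝ) (k j : {x : Fin m // P x}),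
      NormedSpace.exp (T • A) k j = NormedSpace.exp (T • M) k.1 j.1 := by
    intro T k j
    rw [← (StmtAux.exp_entry (T • A) k j).tsum_eq,
      ← (StmtAux.exp_entry (T • M) k.1 j.1).tsum_eq]
    refine tsum_congr fun p => ?_
    rw [smul_pow, smul_pow, Matrix.smul_apply, Matrix.smul_apply, hApow]
  -- complex matrices and spectrum
  set Mc : Matrix (Fin m) (Fin m) ℂ := M.map (algebraMap ℝ ℂ) with hMcdef
  set Ac : Matrix {x : Fin m // P x} {x : Fin m // P x} ℂ :=
    A.map (algebraMap ℝ ℂ) with hAcdef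
  have hAcsub : Ac = Mc.submatrix Subtype.val Subtype.val := by
    ext k j
    simp [hAcdef, hMcdef, hAdef, Matrix.submatrix_apply, Matrix.map_apply]
  have hMcblock : ∀ (k : {x : Fin m // P x}) (j : {x : Fin m // ¬ P x}),
      Mc k.1 j.1 = 0 := by
    intro k j
    simp [hMcdef, Matrix.map_apply, hblockM k.1 j.1 k.2 j.2]
  have hspec : spectrum ℂ Ac ⊆ spectrum ℂ Mc := by
    intro z hz
    rw [spectrum.mem_iff, Algebra.algebraMap_eq_smul_one] at hz
    have hdetA : (z • (1 : Matrix {x : Fin m // P x} {x : Fin m // P x} ℂ) - Ac).det = 0 := by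
      by_contra hdet
      exact hz ((Matrix.isUnit_iff_isUnit_det _).mpr (isUnit_iff_ne_zero.mpr hdet))
    rw [spectrum.mem_iff, Algebra.algebraMap_eq_smul_one]
    intro hunit
    have hdetM : IsUnit (z • (1 : Matrix (Fin m) (Fin m) ℂ) - Mc).det :=
      (Matrix.isUnit_iff_isUnit_det _).mp hunit
    set e : ({x : Fin m // P x} ⊕ {x : Fin m // ¬ P x}) ≃ Fin m := Equiv.sumCompl P with hedef
    have hsub : (z • (1 : Matrix (Fin m) (Fin m) ℂ) - Mc).submatrix e e
        = Matrix.fromBlocks (z • 1 - Ac) 0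
            (-(Mc.submatrix Subtype.val Subtype.val))
            (z • 1 - Mc.submatrix Subtype.val Subtype.val) := by
      ext k j
      rcases k with k | k <;> rcases j with j | j
      · have : ((1 : Matrix (Fin m) (Fin m) ℂ)) k.1 j.1
            = (1 : Matrix {x : Fin m // P x} {x : Fin m // P x} ℂ) k j := by
          by_cases h : k = j
          · subst h; simp [Matrix.one_apply]
          · have h2 : k.1 ≠ j.1 := fun hh => h (Subtype.ext hh)
            simp [Matrix.one_apply, h, h2]
        simp [Matrix.submatrix_apply, Matrix.sub_apply, Matrix.smul_apply, hedef,
          Equiv.sumCompl_apply_inl, hAcsub, this]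
      · have h2 : k.1 ≠ j.1 := fun hh => j.2 (hh ▸ k.2)
        simp [Matrix.submatrix_apply, Matrix.sub_apply, Matrix.smul_apply, hedef,
          Equiv.sumCompl_apply_inl, Equiv.sumCompl_apply_inr,
          Matrix.one_apply_ne h2, hMcblock k j]
      · have h2 : k.1 ≠ j.1 := fun hh => k.2 (hh ▸ j.2)
        simp [Matrix.submatrix_apply, Matrix.sub_apply, Matrix.smul_apply, hedef,
          Equiv.sumCompl_apply_inl, Equiv.sumCompl_apply_inr,
          Matrix.one_apply_ne h2]
      · have : ((1 : Matrix (Fin m) (Fin m) ℂ)) k.1 j.1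
            = (1 : Matrix {x : Fin m // ¬ P x} {x : Fin m // ¬ P x} ℂ) k j := by
          by_cases h : k = j
          · subst h; simp [Matrix.one_apply]
          · have h2 : k.1 ≠ j.1 := fun hh => h (Subtype.ext hh)
            simp [Matrix.one_apply, h, h2]
        simp [Matrix.submatrix_apply, Matrix.sub_apply, Matrix.smul_apply, hedef,
          Equiv.sumCompl_apply_inr, this]
    have hdet2 : (z • (1 : Matrix (Fin m) (Fin m) ℂ) - Mc).det
        = (z • 1 - Ac).det * (z • 1 - Mc.submatrix
            (Subtype.val : {x : Fin m // ¬ P x} → Fin m)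
            (Subtype.val : {x : Fin m // ¬ P x} → Fin m)).det := by
      have hperm := (Matrix.det_submatrix_equiv_self e
        (z • (1 : Matrix (Fin m) (Fin m) ℂ) - Mc)).symm
      rw [hperm, hsub, Matrix.det_fromBlocks_zero₁₂]
    rw [hdet2, hdetA, zero_mul] at hdetM
    simp at hdetM
  -- normed instances on the submatrix algebra
  letI : NormedRing (Matrix {x : Fin m // P x} {x : Fin m // P x} ℂ) :=
    Matrix.linftyOpNormedRing
  letI : NormedAlgebra ℂ (Matrix {x : Fin m // P x} {x : Fin m // P x} ℂ) :=
    Matrix.linftyOpNormedAlgebra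
  letI : NormedAlgebra ℝ (Matrix {x : Fin m // P x} {x : Fin m // P x} ℂ) :=
    Matrix.linftyOpNormedAlgebra
  letI : NormedRing (Matrix {x : Fin m // P x} {x : Fin m // P x} ℝ) :=
    Matrix.linftyOpNormedRing
  letI : NormedAlgebra ℝ (Matrix {x : Fin m // P x} {x : Fin m // P x} ℝ) :=
    Matrix.linftyOpNormedAlgebra
  haveI : Nontrivial (Matrix {x : Fin m // P x} {x : Fin m // P x} ℂ) := by
    refine nontrivial_of_ne 0 1 fun h => ?_
    have := congr_fun (congr_fun h ⟨i, hPi⟩) ⟨i, hPi⟩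
    simp [Matrix.one_apply] at this
  obtain ⟨z, hzmem⟩ := spectrum.nonempty Ac
  have hzmem0 : z ∈ spectrum ℂ Ac := hzmem
  have hzre : 0 < z.re := heig z (hspec hzmem0)
  have hnormle : ∀ X : Matrix {x : Fin m // P x} {x : Fin m // P x} ℂ,
      ‖X‖ ≤ ∑ k : {x : Fin m // P x}, ∑ j : {x : Fin m // P x}, ‖X k j‖ := by
    intro X
    have h1 : (Finset.univ.sup fun k : {x : Fin m // P x} => ∑ j, ‖X k j‖₊)
        ≤ ∑ k : {x : Fin m // P x}, ∑ j, ‖X k j‖₊ :=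
      Finset.sup_le fun k _ => Finset.single_le_sum (f := fun k : {x : Fin m // P x} => ∑ j, ‖X k j‖₊) (fun _ _ => zero_le') (Finset.mem_univ k)
    calc ‖X‖ = ((Finset.univ.sup fun k : {x : Fin m // P x} => ∑ j, ‖X k j‖₊ : NNReal) : ℝ) :=
          Matrix.linfty_opNorm_def X
      _ ≤ ((∑ k : {x : Fin m // P x}, ∑ j, ‖X k j‖₊ : NNReal) : ℝ) := by exact_mod_cast h1
      _ = ∑ k : {x : Fin m // P x}, ∑ j, ‖X k j‖ := by
          push_cast [coe_nnnorm]
          rfl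
  set g : ℝ → ℝ :=
    fun T => ∑ k : {x : Fin m // P x}, ∑ j : {x : Fin m // P x},
      NormedSpace.exp (T • A) k j with hgdef
  have hgrow : ∀ T : ℝ, 0 ≤ T → Real.exp (T * z.re) ≤ g T := by
    intro T hT
    have h1 : (T : ℂ) * z ∈ spectrum ℂ ((T : ℂ) • Ac) := by
      rw [spectrum.smul_eq_smul (T : ℂ) Ac (spectrum.nonempty Ac)]
      exact ⟨z, hzmem, rfl⟩
    have h2 : NormedSpace.exp ((T : ℂ) * z) ∈
        spectrum ℂ (NormedSpace.exp ((T : ℂ) • Ac)) :=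
      spectrum.exp_mem_exp _ h1
    have h3 : ‖NormedSpace.exp ((T : ℂ) * z)‖ ≤ ‖NormedSpace.exp ((T : ℂ) • Ac)‖ :=
      spectrum.norm_le_norm_of_mem h2
    have h4 : ‖NormedSpace.exp ((T : ℂ) * z)‖ = Real.exp (T * z.re) := by
      rw [← Complex.exp_eq_exp_ℂ]
      rw [Complex.norm_exp]
      congr 1
      simp [Complex.mul_re]
    have hmapsmul : ((algebraMap ℝ ℂ).mapMatrix (T • A) :
        Matrix {x : Fin m // P x} {x : Fin m // P x} ℂ) = (T : ℂ) • Ac := by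
      ext k j
      simp [RingHom.mapMatrix_apply, Matrix.map_apply, Matrix.smul_apply, hAcdef,
        smul_eq_mul]
    have h5 : NormedSpace.exp ((T : ℂ) • Ac)
        = (NormedSpace.exp (T • A)).map (algebraMap ℝ ℂ) := by
      have hcont : Continuous ((algebraMap ℝ ℂ).mapMatrix :
          Matrix {x : Fin m // P x} {x : Fin m // P x} ℝ →+*
            Matrix {x : Fin m // P x} {x : Fin m // P x} ℂ) := by
        exact continuous_id.matrix_map (continuous_algebraMap ℝ ℂ)
      letI : NormedAlgebra ℚ (Matrix {x : Fin m // P x} {x : Fin m // P x} ℝ) :=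
        NormedAlgebra.restrictScalars ℚ ℝ _
      have hmap := NormedSpace.map_exp ((algebraMap ℝ ℂ).mapMatrix :
          Matrix {x : Fin m // P x} {x : Fin m // P x} ℝ →+*
            Matrix {x : Fin m // P x} {x : Fin m // P x} ℂ) hcont (T • A)
      rw [hmapsmul] at hmap
      exact hmap.symm
    have h6 : ‖NormedSpace.exp ((T : ℂ) • Ac)‖ ≤ g T := by
      rw [h5]
      refine le_trans (hnormle _) (le_of_eq ?_)
      rw [hgdef]
      refine Finset.sum_congr rfl fun k _ => Finset.sum_congr rfl fun j _ => ?_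
      rw [Matrix.map_apply]
      have hnn : 0 ≤ NormedSpace.exp (T • A) k j := by
        rw [hAexp]; exact hexpnn T hT _ _
      rw [show ((algebraMap ℝ ℂ) (NormedSpace.exp (T • A) k j))
          = ((NormedSpace.exp (T • A) k j : ℝ) : ℂ) from
          congrFun Complex.coe_algebraMap _, Complex.norm_real, Real.norm_eq_abs]
      exact abs_of_nonneg hnn
    calc Real.exp (T * z.re) = ‖NormedSpace.exp ((T : ℂ) * z)‖ := h4.symm
      _ ≤ ‖NormedSpace.exp ((T : ℂ) • Ac)‖ := h3
      _ ≤ g T := h6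
  have hgtend : Tendsto g atTop atTop := by
    have hexp : Tendsto (fun T : ℝ => Real.exp (T * z.re)) atTop atTop :=
      Real.tendsto_exp_atTop.comp (Tendsto.atTop_mul_const hzre tendsto_id)
    exact tendsto_atTop_mono' atTop
      ((eventually_ge_atTop (0 : ℝ)).mono fun T hT => hgrow T hT) hexp
  -- final assembly
  set lmin : ℝ := Finset.univ.inf' Finset.univ_nonempty l with hlmindef
  have hlminpos : 0 < lmin := by
    obtain ⟨j0, _, hj0⟩ := Finset.exists_mem_eq_inf' Finset.univ_nonempty l
    rw [hlmindef, hj0]; exact hl j0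
  have hlminle : ∀ j, lmin ≤ l j := fun j => Finset.inf'_le _ (Finset.mem_univ j)
  have hMsplit : NormedSpace.exp M = Real.exp c • NormedSpace.exp N := by
    have h := hsplit 1
    rw [one_smul, one_smul, one_mul] at h
    exact h
  set ε : ℝ := Finset.univ.inf' Finset.univ_nonempty
    (fun k : {x : Fin m // P x} => NormedSpace.exp M i k.1) with hεdef
  have hεle : ∀ k : {x : Fin m // P x}, ε ≤ NormedSpace.exp M i k.1 :=
    fun k => Finset.inf'_le _ (Finset.mem_univ k)
  have hεpos : 0 < ε := by
    obtain ⟨k0, _, hk0⟩ := Finset.exists_mem_eq_inf' Finset.univ_nonempty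
      (fun k : {x : Fin m // P x} => NormedSpace.exp M i k.1)
    rw [hεdef, hk0, hMsplit]
    obtain ⟨p, hp⟩ := k0.2
    have hle := StmtAux.exp_entry_le hNnn p i k0.1
    have hpos : 0 < NormedSpace.exp N i k0.1 :=
      lt_of_lt_of_le (mul_pos (by positivity) hp) hle
    simpa [Matrix.smul_apply, smul_eq_mul] using mul_pos (Real.exp_pos c) hpos
  have hexpMnn : ∀ k j, 0 ≤ NormedSpace.exp M k j := by
    intro k j
    have := hexpnn 1 zero_le_one k j
    rwa [one_smul] at this
  have hkey : ∀ T : ℝ, 0 ≤ T →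
      ε * lmin * g T ≤ (NormedSpace.exp ((T + 1) • M)).mulVec l i := by
    intro T hT
    have hcomm : Commute M (T • M) := (Commute.refl M).smul_right T
    have hsum : NormedSpace.exp ((T + 1) • M)
        = NormedSpace.exp M * NormedSpace.exp (T • M) := by
      have h := Matrix.exp_add_of_commute M (T • M) hcomm
      rw [show M + T • M = (T + 1) • M by rw [add_smul, one_smul, add_comm]] at h
      exact h
    rw [hsum, ← Matrix.mulVec_mulVec]
    set Y : Fin m → ℝ := (NormedSpace.exp (T • M)).mulVec l with hYdef
    have hYnn : ∀ k, 0 ≤ Y k := by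
      intro k
      rw [hYdef]
      simp only [Matrix.mulVec, dotProduct]
      exact Finset.sum_nonneg fun j _ => mul_nonneg (hexpnn T hT k j) (hl j).le
    have hYge : ∀ k : {x : Fin m // P x},
        (∑ j : {x : Fin m // P x}, NormedSpace.exp (T • A) k j * lmin) ≤ Y k.1 := by
      intro k
      rw [hYdef]
      simp only [Matrix.mulVec, dotProduct]
      calc (∑ j : {x : Fin m // P x}, NormedSpace.exp (T • A) k j * lmin)
          = ∑ j : {x : Fin m // P x},
              NormedSpace.exp (T • M) k.1 j.1 * lmin :=
            Finset.sum_congr rfl fun j _ => by rw [hAexp]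
        _ = ∑ j ∈ Finset.univ.filter P, NormedSpace.exp (T • M) k.1 j * lmin :=
            (Finset.sum_subtype (p := P) (F := inferInstance) (Finset.univ.filter P)
              (fun x => by simp) (fun j => NormedSpace.exp (T • M) k.1 j * lmin)).symm
        _ ≤ ∑ j ∈ Finset.univ.filter P, NormedSpace.exp (T • M) k.1 j * l j := by
            refine Finset.sum_le_sum fun j _ => ?_
            exact mul_le_mul_of_nonneg_left (hlminle j) (hexpnn T hT k.1 j)
        _ ≤ ∑ j : Fin m, NormedSpace.exp (T • M) k.1 j * l j := by
            refine Finset.sum_le_sum_of_subset_of_nonneg (Finset.filter_subset _ _) ?_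
            intro j _ _
            exact mul_nonneg (hexpnn T hT k.1 j) (hl j).le
    have hstep : ε * lmin * g T
        ≤ ∑ k : {x : Fin m // P x}, NormedSpace.exp M i k.1 * Y k.1 := by
      rw [hgdef, Finset.mul_sum]
      refine Finset.sum_le_sum fun k _ => ?_
      have hS : 0 ≤ ∑ j : {x : Fin m // P x}, NormedSpace.exp (T • A) k j * lmin := by
        refine Finset.sum_nonneg fun j _ => mul_nonneg ?_ hlminpos.le
        rw [hAexp]; exact hexpnn T hT _ _
      calc ε * lmin * (∑ j : {x : Fin m // P x}, NormedSpace.exp (T • A) k j)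
          = ε * (∑ j : {x : Fin m // P x}, NormedSpace.exp (T • A) k j * lmin) := by
            rw [← Finset.sum_mul]; ring
        _ ≤ NormedSpace.exp M i k.1 * Y k.1 :=
            mul_le_mul (hεle k) (hYge k) hS ((hεpos.le.trans (hεle k)))
    calc ε * lmin * g T
        ≤ ∑ k : {x : Fin m // P x}, NormedSpace.exp M i k.1 * Y k.1 := hstep
      _ = ∑ k ∈ Finset.univ.filter P, NormedSpace.exp M i k * Y k :=
          (Finset.sum_subtype (p := P) (F := inferInstance) (Finset.univ.filter P)
            (fun x => by simp) (fun k => NormedSpace.exp M i k * Y k)).symm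
      _ ≤ ∑ k : Fin m, NormedSpace.exp M i k * Y k := by
          refine Finset.sum_le_sum_of_subset_of_nonneg (Finset.filter_subset _ _) ?_
          intro k _ _
          exact mul_nonneg (hexpMnn i k) (hYnn k)
      _ = (NormedSpace.exp M).mulVec Y i := by
          simp only [Matrix.mulVec, dotProduct]
  have hfin : ∀ᶠ T : ℝ in atTop,
      ε * lmin * g (T - 1) ≤ (NormedSpace.exp (T • M)).mulVec l i := by
    filter_upwards [eventually_ge_atTop (1 : ℝ)] with T hT
    have h := hkey (T - 1) (by linarith)
    rwa [sub_add_cancel] at h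
  refine tendsto_atTop_mono' atTop hfin ?_
  have h1 : Tendsto (fun T : ℝ => T - 1) atTop atTop := by
    simpa [sub_eq_add_neg] using tendsto_atTop_add_const_right atTop (-1 : ℝ) tendsto_id
  exact (hgtend.comp h1).const_mul_atTop (mul_pos hεpos hlminpos)
end
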